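/- arXiv:2012.13916 — 3 statements merged into one kernel-verified Lean document; each statement's English description precedes it below -/
import Mathlib

section
/- Let Δ ≥ 3 and let xx' and yy' be the two edges of Q_Δ^+ containing a vertex of degree 1. Then every proper edge colouring α of Q_Δ^+ using at most Δ colours satisfies α(xx') = α(yy'). -/
attribute [local instance] Classical.propDecidable

namespace GreedyEdge

variable {V : Type*}

/-- Two edges (as unordered pairs of vertices) share an endpoint. -/
def Shares (e f : Sym2 V) : Prop := ∃ x, x ∈ e ∧ x ∈ f

/-- One step of the greedy procedure: colour the edge `e` with the smallest
colour `≥ 1` not already used on an edge sharing an endpoint with `e`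
(uncoloured edges carry the value `0`). -/
noncomputable def step (c : Sym2 V → ℕ) (e : Sym2 V) : Sym2 V → ℕ :=
  Function.update c e (sInf {k : ℕ | 1 ≤ k ∧ ∀ f : Sym2 V, Shares e f → c f ≠ k})

/-- The greedy edge colouring obtained from the partial colouring `c₀` by
processing the edges of `L` in order (`0` means uncoloured). -/
noncomputable def greedyExtend (c₀ : Sym2 V → ℕ) (L : List (Sym2 V)) : Sym2 V → ℕ :=
  L.foldl step c₀

/-- The greedy edge colouring following the ordering `L` of the edges,
starting from the everywhere-uncoloured function. -/
noncomputable def greedy (L : List (Sym2 V)) : Sym2 V → ℕ :=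
  greedyExtend (fun _ => 0) L

/-- `L` is a connected ordering of the edges of `G`: a linear ordering of the
edge set such that every edge except the first shares an endpoint with some
earlier edge. -/
def ConnOrder (G : SimpleGraph V) (L : List (Sym2 V)) : Prop :=
  L.Nodup ∧ (∀ e, e ∈ L ↔ e ∈ G.edgeSet) ∧
    ∀ i : Fin L.length, 0 < (i : ℕ) →
      ∃ j : Fin L.length, (j : ℕ) < (i : ℕ) ∧ Shares (L.get i) (L.get j)

/-- `c` is a proper edge colouring of `G` using colours from `{1, …, k}`. -/
def IsProperEdgeCol (G : SimpleGraph V) (c : Sym2 V → ℕ) (k : ℕ) : Prop :=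
  (∀ e ∈ G.edgeSet, 1 ≤ c e ∧ c e ≤ k) ∧
    ∀ e ∈ G.edgeSet, ∀ f ∈ G.edgeSet, e ≠ f → Shares e f → c e ≠ c f

/-- The chromatic index `χ'(G)`: the least `k` such that `G` has a proper edge
colouring with colours in `{1, …, k}`. -/
noncomputable def chromIndex (G : SimpleGraph V) : ℕ :=
  sInf {k | ∃ c : Sym2 V → ℕ, IsProperEdgeCol G c k}

/-- The connected greedy chromatic index `χ'_c(G)`: the least number of colours
used by the greedy procedure following a connected ordering of the edges.
(Since the set of colours used by a greedy colouring is `{1, …, max}`, the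
number of colours used is the maximum colour.) -/
noncomputable def connChromIndex (G : SimpleGraph V) : ℕ :=
  sInf {k | ∃ L : List (Sym2 V), ConnOrder G L ∧ ∀ e ∈ G.edgeSet, greedy L e ≤ k}

end GreedyEdge

namespace GreedyEdge

/-- The `n`-dimensional hypercube graph: vertices are elements of `{0,1}ⁿ`,
two vertices being adjacent iff they differ in exactly one coordinate. -/
def hypercube (n : ℕ) : SimpleGraph (Fin n → Bool) :=
  SimpleGraph.fromRel (fun x y => ∃ i, x i ≠ y i ∧ ∀ j, j ≠ i → x j = y j)

/-- The graph `G⁺` obtained from `G` by deleting the edge `xy` and attaching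
two new pendant vertices `x' = Sum.inr true` and `y' = Sum.inr false` to `x`
and `y` respectively. -/
def plusGraph {V : Type*} (G : SimpleGraph V) (x y : V) :
    SimpleGraph (V ⊕ Bool) :=
  SimpleGraph.fromRel (fun a b =>
    (∃ u w : V, a = Sum.inl u ∧ b = Sum.inl w ∧ G.Adj u w ∧ s(u, w) ≠ s(x, y)) ∨
    (a = Sum.inl x ∧ b = Sum.inr true) ∨ (a = Sum.inl y ∧ b = Sum.inr false))

end GreedyEdge

section PlusProof
open GreedyEdge

variable {Δ : ℕ}

private def pflip (v : Fin Δ → Bool) (i : Fin Δ) : Fin Δ → Bool :=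
  Function.update v i (!v i)

private lemma pflip_self (v : Fin Δ → Bool) (i : Fin Δ) : pflip v i i = !v i := by
  simp [pflip]

private lemma pflip_ne_apply (v : Fin Δ → Bool) {i j : Fin Δ} (h : j ≠ i) :
    pflip v i j = v j := by
  simp [pflip, Function.update_of_ne h]

private lemma pflip_ne (v : Fin Δ → Bool) (i : Fin Δ) : pflip v i ≠ v := by
  intro h
  have := congrFun h i
  rw [pflip_self] at this
  simp at this

private lemma pflip_inj (v : Fin Δ → Bool) {i j : Fin Δ} (h : pflip v i = pflip v j) :
    i = j := by
  by_contra hij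
  have := congrFun h i
  rw [pflip_self, pflip_ne_apply v hij] at this
  simp at this

private lemma pflip_pflip (v : Fin Δ → Bool) (i : Fin Δ) : pflip (pflip v i) i = v := by
  funext j
  by_cases h : j = i
  · subst h; rw [pflip_self, pflip_self, Bool.not_not]
  · rw [pflip_ne_apply _ h, pflip_ne_apply _ h]

private lemma adj_pflip (v : Fin Δ → Bool) (i : Fin Δ) :
    (hypercube Δ).Adj v (pflip v i) := by
  rw [hypercube, SimpleGraph.fromRel_adj]
  refine ⟨(pflip_ne v i).symm, Or.inl ⟨i, ?_, fun j hj => (pflip_ne_apply v hj).symm⟩⟩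
  rw [pflip_self]; simp

private lemma adj_exists_pflip {v w : Fin Δ → Bool} (h : (hypercube Δ).Adj v w) :
    ∃ i, w = pflip v i := by
  rw [hypercube, SimpleGraph.fromRel_adj] at h
  obtain ⟨hne, h | h⟩ := h <;>
  · obtain ⟨i, hi, hj⟩ := h
    refine ⟨i, funext fun j => ?_⟩
    by_cases hji : j = i
    · subst hji
      rw [pflip_self]
      revert hi; cases hv : v j <;> cases hw : w j <;> simp
    · rw [pflip_ne_apply v hji]
      first
      | exact (hj j hji).symm
      | exact hj j hji

private lemma padj_inl_inl {x y v w : Fin Δ → Bool} (h : (hypercube Δ).Adj v w)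
    (hne : s(v, w) ≠ s(x, y)) :
    (plusGraph (hypercube Δ) x y).Adj (Sum.inl v) (Sum.inl w) := by
  rw [plusGraph, SimpleGraph.fromRel_adj]
  exact ⟨by simpa using h.ne, Or.inl (Or.inl ⟨v, w, rfl, rfl, h, hne⟩)⟩

private lemma padj_x {x y : Fin Δ → Bool} :
    (plusGraph (hypercube Δ) x y).Adj (Sum.inl x) (Sum.inr true) := by
  rw [plusGraph, SimpleGraph.fromRel_adj]
  exact ⟨by simp, Or.inl (Or.inr (Or.inl ⟨rfl, rfl⟩))⟩

private lemma padj_y {x y : Fin Δ → Bool} :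
    (plusGraph (hypercube Δ) x y).Adj (Sum.inl y) (Sum.inr false) := by
  rw [plusGraph, SimpleGraph.fromRel_adj]
  exact ⟨by simp, Or.inl (Or.inr (Or.inr ⟨rfl, rfl⟩))⟩

private lemma padj_inr {x y v : Fin Δ → Bool} {b : Bool}
    (h : (plusGraph (hypercube Δ) x y).Adj (Sum.inl v) (Sum.inr b)) :
    (b = true ∧ v = x) ∨ (b = false ∧ v = y) := by
  rw [plusGraph, SimpleGraph.fromRel_adj] at h
  obtain ⟨-, h | h⟩ := h <;>
    rcases h with ⟨u, w, h1, h2, -⟩ | ⟨h1, h2⟩ | ⟨h1, h2⟩ <;> simp_all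

private lemma colour_inj {x y : Fin Δ → Bool} {α : Sym2 ((Fin Δ → Bool) ⊕ Bool) → ℕ}
    (hα : IsProperEdgeCol (plusGraph (hypercube Δ) x y) α Δ)
    {v : Fin Δ → Bool} {b b' : (Fin Δ → Bool) ⊕ Bool}
    (h1 : (plusGraph (hypercube Δ) x y).Adj (Sum.inl v) b)
    (h2 : (plusGraph (hypercube Δ) x y).Adj (Sum.inl v) b')
    (hc : α s(Sum.inl v, b) = α s(Sum.inl v, b')) : b = b' := by
  by_contra hbb
  exact hα.2 _ ((SimpleGraph.mem_edgeSet _).mpr h1) _ ((SimpleGraph.mem_edgeSet _).mpr h2)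
    (fun h => hbb (Sym2.congr_right.1 h))
    ⟨Sum.inl v, Sym2.mem_mk_left _ _, Sym2.mem_mk_left _ _⟩ hc

private lemma exists_colour {x y : Fin Δ → Bool} {α : Sym2 ((Fin Δ → Bool) ⊕ Bool) → ℕ}
    (hα : IsProperEdgeCol (plusGraph (hypercube Δ) x y) α Δ)
    {v : Fin Δ → Bool} (ψ : Fin Δ → (Fin Δ → Bool) ⊕ Bool)
    (hadj : ∀ i, (plusGraph (hypercube Δ) x y).Adj (Sum.inl v) (ψ i))
    (hψ : Function.Injective ψ) {k : ℕ} (hk1 : 1 ≤ k) (hk2 : k ≤ Δ) :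
    ∃ b, (plusGraph (hypercube Δ) x y).Adj (Sum.inl v) b ∧ α s(Sum.inl v, b) = k := by
  classical
  set φ : Fin Δ → ℕ := fun i => α s(Sum.inl v, ψ i) with hφ
  have hφinj : Function.Injective φ := fun i j h => hψ (colour_inj hα (hadj i) (hadj j) h)
  have hsub : Finset.image φ Finset.univ ⊆ Finset.Icc 1 Δ := by
    intro m hm
    simp only [Finset.mem_image] at hm
    obtain ⟨i, -, rfl⟩ := hm
    exact Finset.mem_Icc.mpr (hα.1 _ ((SimpleGraph.mem_edgeSet _).mpr (hadj i)))
  have heq : Finset.image φ Finset.univ = Finset.Icc 1 Δ := by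
    refine Finset.eq_of_subset_of_card_le hsub ?_
    rw [Finset.card_image_of_injective _ hφinj]
    simp [Nat.card_Icc]
  have hk : k ∈ Finset.image φ Finset.univ := by
    rw [heq]; exact Finset.mem_Icc.mpr ⟨hk1, hk2⟩
  simp only [Finset.mem_image] at hk
  obtain ⟨i, -, hi⟩ := hk
  exact ⟨ψ i, hadj i, hi⟩

end PlusProof

section PlusProof2
open GreedyEdge

variable {Δ : ℕ}

private lemma all_colours {x y : Fin Δ → Bool} {α : Sym2 ((Fin Δ → Bool) ⊕ Bool) → ℕ}
    (hα : IsProperEdgeCol (plusGraph (hypercube Δ) x y) α Δ)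
    (hxy : (hypercube Δ).Adj x y) (v : Fin Δ → Bool) {k : ℕ} (hk1 : 1 ≤ k) (hk2 : k ≤ Δ) :
    ∃ b, (plusGraph (hypercube Δ) x y).Adj (Sum.inl v) b ∧ α s(Sum.inl v, b) = k := by
  classical
  obtain ⟨i₀, hi₀⟩ := adj_exists_pflip hxy
  by_cases hvx : v = x
  · subst hvx
    refine exists_colour hα
      (fun i => if i = i₀ then Sum.inr true else Sum.inl (pflip v i)) ?_ ?_ hk1 hk2
    · intro i
      by_cases hi : i = i₀
      · simp only [if_pos hi]; exact padj_x
      · simp only [if_neg hi]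
        refine padj_inl_inl (adj_pflip v i) (fun h => hi ?_)
        have hc := Sym2.congr_right.1 h
        exact pflip_inj v (hc.trans hi₀)
    · intro i j h
      dsimp only at h
      by_cases hi : i = i₀ <;> by_cases hj : j = i₀
      · exact hi.trans hj.symm
      · rw [if_pos hi, if_neg hj] at h; exact absurd h (by simp)
      · rw [if_neg hi, if_pos hj] at h; exact absurd h (by simp)
      · rw [if_neg hi, if_neg hj] at h; exact pflip_inj v (Sum.inl.inj h)
  · by_cases hvy : v = y
    · subst hvy
      have hx : x = pflip v i₀ := by rw [hi₀, pflip_pflip]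
      refine exists_colour hα
        (fun i => if i = i₀ then Sum.inr false else Sum.inl (pflip v i)) ?_ ?_ hk1 hk2
      · intro i
        by_cases hi : i = i₀
        · simp only [if_pos hi]; exact padj_y
        · simp only [if_neg hi]
          refine padj_inl_inl (adj_pflip v i) (fun h => hi ?_)
          rw [Sym2.eq_swap (a := x)] at h
          have hc := Sym2.congr_right.1 h
          exact pflip_inj v (hc.trans hx)
      · intro i j h
        dsimp only at h
        by_cases hi : i = i₀ <;> by_cases hj : j = i₀
        · exact hi.trans hj.symm
        · rw [if_pos hi, if_neg hj] at h; exact absurd h (by simp)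
        · rw [if_neg hi, if_pos hj] at h; exact absurd h (by simp)
        · rw [if_neg hi, if_neg hj] at h; exact pflip_inj v (Sum.inl.inj h)
    · refine exists_colour hα (fun i => Sum.inl (pflip v i)) ?_ ?_ hk1 hk2
      · intro i
        refine padj_inl_inl (adj_pflip v i) (fun h => ?_)
        have hv : v ∈ s(x, y) := h ▸ Sym2.mem_mk_left v (pflip v i)
        rcases Sym2.mem_iff.1 hv with h' | h'
        · exact hvx h'
        · exact hvy h'
      · intro i j h
        exact pflip_inj v (Sum.inl.inj h)

end PlusProof2

open GreedyEdge in
/-- For `Δ ≥ 3`, in every proper edge colouring of `Q_Δ⁺` using at most `Δ`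
colours, the two pendant edges `xx'` and `yy'` receive the same colour. -/
theorem plus_hypercube_pendant_edges_same_colour (Δ : ℕ) (hΔ : 3 ≤ Δ)
    (x y : Fin Δ → Bool) (hxy : (hypercube Δ).Adj x y)
    (α : Sym2 ((Fin Δ → Bool) ⊕ Bool) → ℕ)
    (hα : IsProperEdgeCol (plusGraph (hypercube Δ) x y) α Δ) :
    α s(Sum.inl x, Sum.inr true) = α s(Sum.inl y, Sum.inr false) := by
  classical
  by_contra hne
  obtain ⟨hc1, hc2⟩ := hα.1 _ ((SimpleGraph.mem_edgeSet _).mpr padj_x)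
  choose g hg1 hg2 using fun v => all_colours hα hxy v hc1 hc2
  have hgx : g x = Sum.inr true := colour_inj hα (hg1 x) padj_x (by rw [hg2 x])
  have key : ∀ v, v ≠ x → ∃ u, g v = Sum.inl u ∧ u ≠ x ∧ u ≠ v := by
    intro v hv
    cases hb : g v with
    | inr b =>
      have h1 := hg1 v
      rw [hb] at h1
      rcases padj_inr h1 with ⟨-, hvx⟩ | ⟨hbf, hvy⟩
      · exact absurd hvx hv
      · subst hvy; subst hbf
        have := hg2 v
        rw [hb] at this
        exact absurd this.symm hne
    | inl u =>
      refine ⟨u, rfl, ?_, ?_⟩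
      · intro hux
        rw [hux] at hb
        have hadj : (plusGraph (hypercube Δ) x y).Adj (Sum.inl x) (Sum.inl v) := by
          have h1 := hg1 v; rw [hb] at h1; exact h1.symm
        have hcol : α s(Sum.inl x, Sum.inl v) = α s(Sum.inl x, Sum.inr true) := by
          rw [Sym2.eq_swap]
          have h2 := hg2 v; rw [hb] at h2
          rw [h2]
        have := colour_inj hα hadj padj_x hcol
        simp at this
      · intro huv
        rw [huv] at hb
        have h1 := hg1 v; rw [hb] at h1
        exact h1.ne rfl
  choose w hw hwx hwv using key
  have hinv : ∀ a (ha : a ≠ x) (hb : w a ha ≠ x), w (w a ha) hb = a := by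
    intro a ha hb
    have hadj : (plusGraph (hypercube Δ) x y).Adj (Sum.inl (w a ha)) (Sum.inl a) := by
      have h1 := hg1 a; rw [hw a ha] at h1; exact h1.symm
    have hcol : α s(Sum.inl (w a ha), Sum.inl a)
        = α s(Sum.inl x, Sum.inr true) := by
      rw [Sym2.eq_swap]
      have := hg2 a; rw [hw a ha] at this
      rw [this]
    have h1 : g (w a ha) = Sum.inl a :=
      colour_inj hα (hg1 (w a ha)) hadj ((hg2 (w a ha)).trans hcol.symm)
    have h2 := hw (w a ha) hb
    rw [h1] at h2
    exact (Sum.inl.inj h2).symm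
  have hs : ∑ _v ∈ Finset.univ.erase x, (1 : ZMod 2) = 0 := by
    refine Finset.sum_involution
      (fun v hv => w v (Finset.mem_erase.1 hv).1)
      (fun a ha => by decide)
      (fun a ha _ => hwv a _)
      (fun a ha => Finset.mem_erase.mpr ⟨hwx a _, Finset.mem_univ _⟩)
      (fun a ha => hinv a _ _)
  have hcard0 : ((Finset.univ.erase x).card : ZMod 2) = 0 := by
    rwa [Finset.sum_const, nsmul_eq_mul, mul_one] at hs
  have hdvd : 2 ∣ (Finset.univ.erase x).card :=
    (ZMod.natCast_eq_zero_iff _ 2).1 hcard0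
  have hcarde : (Finset.univ.erase x).card = 2 ^ Δ - 1 := by
    rw [Finset.card_erase_of_mem (Finset.mem_univ x), Finset.card_univ]
    simp
  have hpow : 2 ^ Δ = 2 * 2 ^ (Δ - 1) := by
    rw [← pow_succ']
    congr 1
    omega
  have hpos : 1 ≤ 2 ^ (Δ - 1) := Nat.one_le_two_pow
  obtain ⟨m, hm⟩ := hdvd
  omega
end

section
/- Let Δ ≥ 3, let xx' and yy' be the two edges of Q_Δ^+ containing a vertex of degree 1, and let i ∈ {1,…,Δ}. Then there exists a connected ordering e_1, e_2, …, e_m of the edges of Q_Δ^+ with e_1 = xx' such that the colouring obtained by assigning e_1 the colour i and then assigning each subsequent edge the smallest positive integer colour not already used on an incident edge is a proper edge colouring using only colours from {1,…,Δ}. -/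
attribute [local instance] Classical.propDecidable

-- Auxiliary development
namespace GreedyEdge
variable {Δ : ℕ}

section FlatDecomp
variable {α : Type*}

lemma flatten_decomp (Bs : List (List α)) (t : ℕ) (ht : t < Bs.flatten.length) :
    ∃ b, ∃ hb : b < Bs.length, ∃ p, ∃ hp : p < Bs[b].length,
      Bs.flatten[t] = Bs[b][p] ∧
      Bs.flatten.take t = (Bs.take b).flatten ++ Bs[b].take p := by
  induction Bs generalizing t with
  | nil => simp at ht
  | cons B Bs' ih =>
    have hfl : (B :: Bs').flatten = B ++ Bs'.flatten := by simp
    by_cases hB : t < B.length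
    · refine ⟨0, by simp, t, by simpa using hB, ?_, ?_⟩
      · simp only [hfl]
        rw [List.getElem_append_left hB]
        rfl
      · simp only [hfl]
        rw [List.take_append]
        have : t - B.length = 0 := by omega
        simp [this]
    · push_neg at hB
      have ht' : t - B.length < Bs'.flatten.length := by
        simp only [hfl, List.length_append] at ht; omega
      obtain ⟨b, hb, p, hp, hget, htake⟩ := ih (t - B.length) ht'
      refine ⟨b + 1, by simpa using hb, p, by simpa using hp, ?_, ?_⟩
      · simp only [hfl]
        rw [List.getElem_append_right hB]
        simpa using hget
      · simp only [hfl]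
        rw [List.take_append]
        rw [List.take_of_length_le hB, htake]
        simp
end FlatDecomp

lemma greedy_realize (c : Sym2 V → ℕ) :
    ∀ (T done : List (Sym2 V)) (c₀ : Sym2 V → ℕ),
      (∀ f ∈ done, c₀ f = c f) → (∀ f, f ∉ done → c₀ f = 0) →
      (done ++ T).Nodup →
      (∀ e ∈ done ++ T, 1 ≤ c e) →
      (∀ e f, e ∈ done ++ T → f ∈ done ++ T → e ≠ f → Shares e f → c e ≠ c f) →
      (∀ p (hp : p < T.length), ∀ j, 1 ≤ j → j < c T[p] →
        ∃ f ∈ done ++ T.take p, Shares T[p] f ∧ c f = j) →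
      (∀ f ∈ done ++ T, greedyExtend c₀ T f = c f) ∧
        (∀ f, f ∉ done ++ T → greedyExtend c₀ T f = 0) := by
  intro T
  induction T with
  | nil =>
    intro done c₀ h1 h0 _ _ _ _
    simp only [List.append_nil, greedyExtend, List.foldl_nil]
    exact ⟨h1, h0⟩
  | cons e T' ih =>
    intro done c₀ h1 h0 hnd hge hprop hsee
    have heT : e ∈ done ++ e :: T' := by simp
    have hed : e ∉ done := by
      have := hnd
      rw [List.nodup_append'] at this
      intro hmem
      exact this.2.2 hmem (by simp)
    have hval : sInf {k : ℕ | 1 ≤ k ∧ ∀ f : Sym2 V, Shares e f → c₀ f ≠ k} = c e := by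
      have hmem : c e ∈ {k : ℕ | 1 ≤ k ∧ ∀ f : Sym2 V, Shares e f → c₀ f ≠ k} := by
        refine ⟨hge e heT, ?_⟩
        intro f hsh
        by_cases hf : f ∈ done
        · rw [h1 f hf]
          have hne : e ≠ f := by rintro rfl; exact hed hf
          intro hc
          exact hprop e f heT (by simp [hf]) hne hsh hc.symm
        · rw [h0 f hf]
          have := hge e heT
          omega
      have hlb : ∀ k ∈ {k : ℕ | 1 ≤ k ∧ ∀ f : Sym2 V, Shares e f → c₀ f ≠ k}, c e ≤ k := by
        intro k hk
        by_contra hlt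
        push_neg at hlt
        have hk1 : 1 ≤ k := hk.1
        obtain ⟨f, hfmem, hfsh, hfc⟩ := hsee 0 (by simp) k hk1 (by simpa using hlt)
        simp only [List.take_zero, List.append_nil] at hfmem
        have hck : c₀ f = k := by rw [h1 f hfmem]; exact hfc
        exact hk.2 f (by simpa using hfsh) hck
      exact le_antisymm (Nat.sInf_le hmem) (le_csInf ⟨c e, hmem⟩ hlb)
    have hstep : step c₀ e = Function.update c₀ e (c e) := by
      unfold step; rw [hval]
    have hfold : greedyExtend c₀ (e :: T') = greedyExtend (step c₀ e) T' := rfl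
    rw [hfold, hstep]
    set c₁ := Function.update c₀ e (c e) with hc₁
    have key := ih (done ++ [e]) c₁
      (by
        intro f hf
        rcases List.mem_append.mp hf with hf | hf
        · have hne : f ≠ e := fun h => hed (h ▸ hf)
          rw [hc₁, Function.update_of_ne hne, h1 f hf]
        · simp only [List.mem_singleton] at hf; subst hf; simp [hc₁])
      (by
        intro f hf
        have hfd : f ∉ done := fun h => hf (by simp [h])
        have hfe : f ≠ e := fun h => hf (by simp [h])
        rw [hc₁, Function.update_of_ne hfe, h0 f hfd])
      (by simpa using hnd)
      (by intro g hg; exact hge g (by simpa using hg))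
      (by intro g f hg hf; exact hprop g f (by simpa using hg) (by simpa using hf))
      (by
        intro p hp j hj1 hjlt
        obtain ⟨f, hfmem, hsh, hfc⟩ := hsee (p+1) (by simpa using hp) j hj1 (by simpa using hjlt)
        refine ⟨f, ?_, by simpa using hsh, hfc⟩
        simp only [List.take_succ_cons] at hfmem
        simpa [List.append_assoc] using hfmem)
    constructor
    · intro f hf
      exact key.1 f (by simpa [List.append_assoc] using hf)
    · intro f hf
      exact key.2 f (by simpa [List.append_assoc] using hf)


def flip (v : Fin Δ → Bool) (j : Fin Δ) : Fin Δ → Bool := Function.update v j (!(v j))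

@[simp] lemma flip_self (v : Fin Δ → Bool) (j : Fin Δ) : flip v j j = !(v j) :=
  Function.update_self ..

lemma flip_ne_apply (v : Fin Δ → Bool) {l j : Fin Δ} (h : l ≠ j) : flip v j l = v l :=
  Function.update_of_ne h ..

@[simp] lemma flip_flip (v : Fin Δ → Bool) (j : Fin Δ) : flip (flip v j) j = v := by
  funext l
  by_cases h : l = j
  · subst h; simp
  · rw [flip_ne_apply _ h, flip_ne_apply _ h]

lemma flip_ne (v : Fin Δ → Bool) (j : Fin Δ) : flip v j ≠ v := by
  intro h
  have := congrFun h j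
  simp at this

lemma flip_inj {v : Fin Δ → Bool} {j j' : Fin Δ} (h : flip v j = flip v j') : j = j' := by
  by_contra hne
  have h1 := congrFun h j
  rw [flip_self, flip_ne_apply _ hne] at h1
  simp at h1

lemma flip_apply (v : Fin Δ → Bool) (j l : Fin Δ) :
    flip v j l = if l = j then !(v l) else v l := by
  by_cases h : l = j
  · subst h; simp
  · rw [flip_ne_apply _ h, if_neg h]

lemma flip_comm (v : Fin Δ → Bool) {a b : Fin Δ} (h : a ≠ b) :
    flip (flip v a) b = flip (flip v b) a := by
  funext l
  simp only [flip_apply]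
  split_ifs <;> simp_all

lemma eq_flip_of_ne {u w : Fin Δ → Bool} {j : Fin Δ}
    (hj : u j ≠ w j) (ho : ∀ l, l ≠ j → u l = w l) : w = flip u j := by
  funext l
  by_cases h : l = j
  · subst h
    rw [flip_self]
    cases hu : u l <;> cases hw : w l <;> simp_all
  · rw [flip_ne_apply _ h, ho l h]

/-- the colour of direction `j` -/
def colDir (d0 : Fin Δ) (i : ℕ) (j : Fin Δ) : ℕ :=
  if j = d0 then i else if (j : ℕ) + 1 = i then (d0 : ℕ) + 1 else (j : ℕ) + 1

variable {d0 : Fin Δ} {i : ℕ}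

lemma colDir_d0 : colDir d0 i d0 = i := by simp [colDir]

lemma colDir_pos (hi : 1 ≤ i) (j : Fin Δ) : 1 ≤ colDir d0 i j := by
  unfold colDir; split_ifs <;> omega

lemma colDir_le (hiΔ : i ≤ Δ) (j : Fin Δ) : colDir d0 i j ≤ Δ := by
  have h1 := j.isLt
  have h2 := d0.isLt
  unfold colDir; split_ifs <;> omega

lemma colDir_inj (hi : 1 ≤ i) {j j' : Fin Δ} (h : colDir d0 i j = colDir d0 i j') : j = j' := by
  have hval : (j : ℕ) = (j' : ℕ) → j = j' := fun hh => Fin.ext hh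
  have hvd : (j : ℕ) = (d0 : ℕ) → j = d0 := fun hh => Fin.ext hh
  have hvd' : (j' : ℕ) = (d0 : ℕ) → j' = d0 := fun hh => Fin.ext hh
  unfold colDir at h
  by_cases e1 : j = d0 <;> by_cases e2 : j' = d0
  · rw [e1, e2]
  · exfalso
    rw [if_pos e1, if_neg e2] at h
    by_cases e3 : (j' : ℕ) + 1 = i
    · rw [if_pos e3] at h
      exact e2 (hvd' (by omega))
    · rw [if_neg e3] at h; omega
  · exfalso
    rw [if_neg e1, if_pos e2] at h
    by_cases e3 : (j : ℕ) + 1 = i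
    · rw [if_pos e3] at h
      exact e1 (hvd (by omega))
    · rw [if_neg e3] at h; omega
  · rw [if_neg e1, if_neg e2] at h
    by_cases e3 : (j : ℕ) + 1 = i <;> by_cases e4 : (j' : ℕ) + 1 = i
    · exact hval (by omega)
    · rw [if_pos e3, if_neg e4] at h
      exact absurd (hvd' (by omega)) e2
    · rw [if_neg e3, if_pos e4] at h
      exact absurd (hvd (by omega)) e1
    · rw [if_neg e3, if_neg e4] at h
      exact hval (by omega)

lemma colDir_surj (hi : 1 ≤ i) (hiΔ : i ≤ Δ) {k : ℕ} (hk1 : 1 ≤ k) (hkΔ : k ≤ Δ) :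
    ∃ j : Fin Δ, colDir d0 i j = k := by
  by_cases hki : k = i
  · exact ⟨d0, by rw [colDir_d0, hki]⟩
  · by_cases hkd : k = (d0 : ℕ) + 1
    · refine ⟨⟨i - 1, by omega⟩, ?_⟩
      unfold colDir
      rw [if_neg, if_pos (by simp; omega)]
      · rw [hkd]
      · intro hh
        have : i - 1 = (d0 : ℕ) := congrArg Fin.val hh
        omega
    · refine ⟨⟨k - 1, by omega⟩, ?_⟩
      unfold colDir
      rw [if_neg, if_neg (by simp; omega)]
      · simp; omega
      · intro hh
        have : k - 1 = (d0 : ℕ) := congrArg Fin.val hh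
        omega

abbrev Vx (Δ : ℕ) := (Fin Δ → Bool) ⊕ Bool

def colPair (d0 : Fin Δ) (i : ℕ) : Vx Δ → Vx Δ → ℕ
  | .inl u, .inl w =>
      if h : (Finset.univ.filter (fun j => u j ≠ w j)).Nonempty then
        colDir d0 i ((Finset.univ.filter (fun j => u j ≠ w j)).min' h)
      else 0
  | .inl _, .inr _ => i
  | .inr _, .inl _ => i
  | .inr _, .inr _ => 0

lemma filter_ne_comm (u w : Fin Δ → Bool) :
    (Finset.univ.filter (fun j => u j ≠ w j)) = (Finset.univ.filter (fun j => w j ≠ u j)) := by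
  ext l
  simp only [Finset.mem_filter, Finset.mem_univ, true_and]
  exact ne_comm

lemma colPair_symm (d0 : Fin Δ) (i : ℕ) (a b : Vx Δ) :
    colPair d0 i a b = colPair d0 i b a := by
  cases a <;> cases b <;> try rfl
  show (if h : _ then _ else _) = (if h : _ then _ else _)
  rw [filter_ne_comm]

noncomputable def col (d0 : Fin Δ) (i : ℕ) : Sym2 (Vx Δ) → ℕ :=
  Sym2.lift ⟨colPair d0 i, colPair_symm d0 i⟩

lemma col_mk (d0 : Fin Δ) (i : ℕ) (a b : Vx Δ) : col d0 i s(a, b) = colPair d0 i a b :=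
  Sym2.lift_mk ..

lemma dset_flip (u : Fin Δ → Bool) (j : Fin Δ) :
    (Finset.univ.filter (fun l => u l ≠ flip u j l)) = {j} := by
  ext l
  simp only [Finset.mem_filter, Finset.mem_univ, true_and, Finset.mem_singleton]
  constructor
  · intro h
    by_contra hl
    exact h (flip_ne_apply _ hl).symm
  · rintro rfl
    simp

variable {d0 : Fin Δ} {i : ℕ}

lemma col_cube (u : Fin Δ → Bool) (j : Fin Δ) :
    col d0 i s(Sum.inl u, Sum.inl (flip u j)) = colDir d0 i j := by
  rw [col_mk]
  show (if h : _ then _ else _) = _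
  simp only [dset_flip]
  rw [dif_pos (Finset.singleton_nonempty j), Finset.min'_singleton]

lemma col_pend (u : Fin Δ → Bool) (b : Bool) : col d0 i s(Sum.inl u, Sum.inr b) = i := by
  rw [col_mk]; rfl


lemma hyperAdj_iff {u w : Fin Δ → Bool} :
    (hypercube Δ).Adj u w ↔ ∃ j, w = flip u j := by
  unfold hypercube
  rw [SimpleGraph.fromRel_adj]
  constructor
  · rintro ⟨hne, h | h⟩
    · obtain ⟨j, hj, ho⟩ := h
      exact ⟨j, eq_flip_of_ne hj ho⟩
    · obtain ⟨j, hj, ho⟩ := h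
      exact ⟨j, eq_flip_of_ne (Ne.symm hj) (fun l hl => (ho l hl).symm)⟩
  · rintro ⟨j, rfl⟩
    refine ⟨(flip_ne u j).symm, Or.inl ⟨j, ?_, fun l hl => (flip_ne_apply _ hl).symm⟩⟩
    simp

section XD
variable (x : Fin Δ → Bool) (d0 : Fin Δ)

lemma sxy_iff {u : Fin Δ → Bool} {j : Fin Δ} :
    s(u, flip u j) = s(x, flip x d0) ↔ ((u = x ∨ u = flip x d0) ∧ j = d0) := by
  rw [Sym2.eq_iff]
  constructor
  · rintro (⟨rfl, h2⟩ | ⟨h1, h2⟩)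
    · exact ⟨Or.inl rfl, flip_inj h2⟩
    · subst h1
      have : flip (flip x d0) j = flip (flip x d0) d0 := by rw [h2, flip_flip]
      exact ⟨Or.inr rfl, flip_inj this⟩
  · rintro ⟨h1 | h1, rfl⟩
    · subst h1; exact Or.inl ⟨rfl, rfl⟩
    · subst h1; exact Or.inr ⟨rfl, by rw [flip_flip]⟩

lemma edge_char (e : Sym2 (Vx Δ)) :
    e ∈ (plusGraph (hypercube Δ) x (flip x d0)).edgeSet ↔
      (e = s(Sum.inl x, Sum.inr true) ∨ e = s(Sum.inl (flip x d0), Sum.inr false) ∨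
        ∃ u j, e = s(Sum.inl u, Sum.inl (flip u j)) ∧ ¬((u = x ∨ u = flip x d0) ∧ j = d0)) := by
  constructor
  · induction e using Sym2.ind with
    | _ a b =>
      intro hmem
      rw [SimpleGraph.mem_edgeSet] at hmem
      unfold plusGraph at hmem
      rw [SimpleGraph.fromRel_adj] at hmem
      obtain ⟨-, h | h⟩ := hmem
      · rcases h with ⟨u, w, rfl, rfl, hadj, hne⟩ | ⟨rfl, rfl⟩ | ⟨rfl, rfl⟩
        · obtain ⟨j, rfl⟩ := hyperAdj_iff.mp hadj
          exact Or.inr (Or.inr ⟨u, j, rfl, fun hc => hne ((sxy_iff x d0).mpr hc)⟩)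
        · exact Or.inl rfl
        · exact Or.inr (Or.inl rfl)
      · rcases h with ⟨u, w, rfl, rfl, hadj, hne⟩ | ⟨rfl, rfl⟩ | ⟨rfl, rfl⟩
        · obtain ⟨j, rfl⟩ := hyperAdj_iff.mp hadj
          refine Or.inr (Or.inr ⟨u, j, Sym2.eq_swap, fun hc => hne ((sxy_iff x d0).mpr hc)⟩)
        · exact Or.inl Sym2.eq_swap
        · exact Or.inr (Or.inl Sym2.eq_swap)
  · intro h
    rcases h with rfl | rfl | ⟨u, j, rfl, hcond⟩
    · rw [SimpleGraph.mem_edgeSet]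
      unfold plusGraph
      rw [SimpleGraph.fromRel_adj]
      exact ⟨by simp, Or.inl (Or.inr (Or.inl ⟨rfl, rfl⟩))⟩
    · rw [SimpleGraph.mem_edgeSet]
      unfold plusGraph
      rw [SimpleGraph.fromRel_adj]
      exact ⟨by simp, Or.inl (Or.inr (Or.inr ⟨rfl, rfl⟩))⟩
    · rw [SimpleGraph.mem_edgeSet]
      unfold plusGraph
      rw [SimpleGraph.fromRel_adj]
      refine ⟨by simp [(flip_ne u j).symm], Or.inl (Or.inl ⟨u, flip u j, rfl, rfl, hyperAdj_iff.mpr ⟨j, rfl⟩, fun hc => hcond ((sxy_iff x d0).mp hc)⟩)⟩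

lemma cube_rebase {u : Fin Δ → Bool} {j : Fin Δ} {z : Fin Δ → Bool}
    (hz : (Sum.inl z : Vx Δ) ∈ s(Sum.inl u, Sum.inl (flip u j))) :
    (s(Sum.inl u, Sum.inl (flip u j)) : Sym2 (Vx Δ)) = s(Sum.inl z, Sum.inl (flip z j)) := by
  rw [Sym2.mem_iff] at hz
  rcases hz with hz | hz
  · rw [Sum.inl.injEq] at hz; subst hz; rfl
  · rw [Sum.inl.injEq] at hz
    have : u = flip z j := by rw [hz, flip_flip]
    rw [this, flip_flip, Sym2.eq_swap]


lemma col_bounds (hi : 1 ≤ i) (hiΔ : i ≤ Δ) :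
    ∀ e ∈ (plusGraph (hypercube Δ) x (flip x d0)).edgeSet,
      1 ≤ col d0 i e ∧ col d0 i e ≤ Δ := by
  intro e he
  rcases (edge_char x d0 e).mp he with rfl | rfl | ⟨u, j, rfl, -⟩
  · rw [col_pend]; exact ⟨hi, hiΔ⟩
  · rw [col_pend]; exact ⟨hi, hiΔ⟩
  · rw [col_cube]; exact ⟨colDir_pos hi j, colDir_le hiΔ j⟩

lemma pend_cube_ne (hi : 1 ≤ i) {w : Fin Δ → Bool} {b : Bool}
    (hw : w = x ∨ w = flip x d0) {u : Fin Δ → Bool} {j : Fin Δ}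
    (hcond : ¬((u = x ∨ u = flip x d0) ∧ j = d0))
    (hsh : Shares (s(Sum.inl w, Sum.inr b) : Sym2 (Vx Δ)) s(Sum.inl u, Sum.inl (flip u j))) :
    col d0 i s(Sum.inl u, Sum.inl (flip u j)) ≠ i := by
  obtain ⟨z, hz1, hz2⟩ := hsh
  rw [Sym2.mem_iff] at hz1
  have hwz : (Sum.inl w : Vx Δ) ∈ s(Sum.inl u, Sum.inl (flip u j)) := by
    rcases hz1 with rfl | rfl
    · exact hz2
    · rw [Sym2.mem_iff] at hz2
      rcases hz2 with h | h <;> exact absurd h (by simp)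
  rw [cube_rebase hwz, col_cube]
  have hjd : j ≠ d0 := by
    rintro rfl
    rw [Sym2.mem_iff] at hwz
    rcases hwz with h | h
    · rw [Sum.inl.injEq] at h
      exact hcond ⟨by rw [← h]; exact hw, rfl⟩
    · rw [Sum.inl.injEq] at h
      have hu : u = flip w j := by rw [h, flip_flip]
      rcases hw with rfl | rfl
      · exact hcond ⟨Or.inr hu, rfl⟩
      · rw [flip_flip] at hu
        exact hcond ⟨Or.inl hu, rfl⟩
  intro hc
  exact hjd (colDir_inj hi (hc.trans (colDir_d0 (d0 := d0) (i := i)).symm))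

lemma col_proper (hi : 1 ≤ i) :
    ∀ e ∈ (plusGraph (hypercube Δ) x (flip x d0)).edgeSet,
      ∀ f ∈ (plusGraph (hypercube Δ) x (flip x d0)).edgeSet,
        e ≠ f → Shares e f → col d0 i e ≠ col d0 i f := by
  have hxy' : x ≠ flip x d0 := (flip_ne x d0).symm
  have hnosh : ¬ Shares (s(Sum.inl x, Sum.inr true) : Sym2 (Vx Δ))
      s(Sum.inl (flip x d0), Sum.inr false) := by
    rintro ⟨z, hz1, hz2⟩
    rw [Sym2.mem_iff] at hz1 hz2
    rcases hz1 with rfl | rfl <;> rcases hz2 with h | h <;> simp_all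
  intro e he f hf hne hsh
  rcases (edge_char x d0 e).mp he with rfl | rfl | ⟨u, j, rfl, hce⟩ <;>
    rcases (edge_char x d0 f).mp hf with rfl | rfl | ⟨u', j', rfl, hcf⟩
  · exact absurd rfl hne
  · exact absurd hsh hnosh
  · rw [col_pend]
    exact fun hc => pend_cube_ne x d0 hi (Or.inl rfl) hcf hsh hc.symm
  · obtain ⟨z, hz1, hz2⟩ := hsh
    exact absurd ⟨z, hz2, hz1⟩ hnosh
  · exact absurd rfl hne
  · rw [col_pend]
    exact fun hc => pend_cube_ne x d0 hi (Or.inr rfl) hcf hsh hc.symm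
  · rw [col_pend]
    exact pend_cube_ne x d0 hi (Or.inl rfl) hce ⟨hsh.choose, (hsh.choose_spec).2, (hsh.choose_spec).1⟩
  · rw [col_pend]
    exact pend_cube_ne x d0 hi (Or.inr rfl) hce ⟨hsh.choose, (hsh.choose_spec).2, (hsh.choose_spec).1⟩
  · obtain ⟨z, hz1, hz2⟩ := hsh
    have hz' : ∃ z' : Fin Δ → Bool, z = Sum.inl z' := by
      rw [Sym2.mem_iff] at hz1
      rcases hz1 with rfl | rfl
      · exact ⟨u, rfl⟩
      · exact ⟨flip u j, rfl⟩
    obtain ⟨z', rfl⟩ := hz'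
    rw [cube_rebase hz1, cube_rebase hz2, col_cube, col_cube]
    intro hc
    have := colDir_inj hi hc
    subst this
    exact hne (by rw [cube_rebase hz1, cube_rebase hz2])


variable (j1 : Fin Δ) (i : ℕ)

def wt (u : Fin Δ → Bool) : ℕ := (Finset.univ.filter (fun l => u l ≠ x l)).card

def quadL : List (Fin Δ → Bool) := [x, flip x j1, flip (flip x j1) d0, flip x d0]

noncomputable def restL : List (Fin Δ → Bool) :=
  ((Finset.univ.toList (α := Fin Δ → Bool)).filter
      (fun u => decide (u ∉ quadL x d0 j1))).mergeSort
    (fun u v => decide (wt x u ≤ wt x v))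

noncomputable def VL : List (Fin Δ → Bool) := quadL x d0 j1 ++ restL x d0 j1

noncomputable def idx (v : Fin Δ → Bool) : ℕ := (VL x d0 j1).idxOf v

def ed (v : Fin Δ → Bool) (j : Fin Δ) : Sym2 (Vx Δ) :=
  if (v = x ∨ v = flip x d0) ∧ j = d0 then
    (if v = x then s(Sum.inl x, Sum.inr true) else s(Sum.inl (flip x d0), Sum.inr false))
  else s(Sum.inl v, Sum.inl (flip v j))

noncomputable def cdirs (v : Fin Δ → Bool) : List (Fin Δ) :=
  (List.finRange Δ).filter
    (fun j => decide (¬((v = x ∨ v = flip x d0) ∧ j = d0) ∧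
      idx x d0 j1 v < idx x d0 j1 (flip v j)))

def pdirs (v : Fin Δ → Bool) : List (Fin Δ) := if v = flip x d0 then [d0] else []

noncomputable def blk (v : Fin Δ → Bool) : List (Sym2 (Vx Δ)) :=
  (if v = x then [s(Sum.inl x, Sum.inr true)] else []) ++
    (((pdirs x d0 v ++ cdirs x d0 j1 v).map (ed x d0 v)).mergeSort
      (fun e f => decide (col d0 i e ≤ col d0 i f)))

noncomputable def LL : List (Sym2 (Vx Δ)) := (VL x d0 j1).flatMap (blk x d0 j1 i)

variable {x d0 j1}

lemma quad_nodup (hj1 : j1 ≠ d0) : (quadL x d0 j1).Nodup := by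
  have h1 : x ≠ flip x j1 := (flip_ne x j1).symm
  have h2 : x ≠ flip (flip x j1) d0 := by
    intro h
    have := congrFun h d0
    rw [flip_self, flip_ne_apply _ (Ne.symm hj1)] at this
    simp at this
  have h3 : x ≠ flip x d0 := (flip_ne x d0).symm
  have h4 : flip x j1 ≠ flip (flip x j1) d0 := (flip_ne _ d0).symm
  have h5 : flip x j1 ≠ flip x d0 := by
    intro h
    have := congrFun h j1
    rw [flip_self, flip_ne_apply _ hj1] at this
    simp at this
  have h6 : flip (flip x j1) d0 ≠ flip x d0 := by
    intro h
    have := congrFun h j1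
    rw [flip_ne_apply _ hj1, flip_self, flip_ne_apply _ hj1] at this
    simp at this
  simp [quadL, h1, h2, h3, h4, h5, h6]

lemma mem_restL_iff {u : Fin Δ → Bool} :
    u ∈ restL x d0 j1 ↔ u ∉ quadL x d0 j1 := by
  unfold restL
  rw [(List.mergeSort_perm _ _).mem_iff, List.mem_filter]
  simp [Finset.mem_toList]

lemma mem_VL (u : Fin Δ → Bool) : u ∈ VL x d0 j1 := by
  unfold VL
  rw [List.mem_append]
  by_cases h : u ∈ quadL x d0 j1
  · exact Or.inl h
  · exact Or.inr (mem_restL_iff.mpr h)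

lemma restL_nodup : (restL x d0 j1).Nodup := by
  unfold restL
  exact ((List.mergeSort_perm _ _).nodup_iff).mpr
    ((Finset.nodup_toList _).filter _)

lemma VL_nodup (hj1 : j1 ≠ d0) : (VL x d0 j1).Nodup := by
  unfold VL
  rw [List.nodup_append']
  exact ⟨quad_nodup hj1, restL_nodup, fun a ha hb => (mem_restL_iff.mp hb) ha⟩

lemma idx_lt (v : Fin Δ → Bool) : idx x d0 j1 v < (VL x d0 j1).length :=
  List.idxOf_lt_length_iff.mpr (mem_VL v)

lemma VL_get_idx (v : Fin Δ → Bool) :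
    (VL x d0 j1)[idx x d0 j1 v]'(idx_lt v) = v :=
  List.getElem_idxOf _

lemma idx_getElem (hj1 : j1 ≠ d0) {b : ℕ} (hb : b < (VL x d0 j1).length) :
    idx x d0 j1 ((VL x d0 j1)[b]) = b :=
  (VL_nodup hj1).idxOf_getElem b hb

lemma idx_inj (hj1 : j1 ≠ d0) {u v : Fin Δ → Bool}
    (h : idx x d0 j1 u = idx x d0 j1 v) : u = v := by
  have hu := VL_get_idx (x := x) (d0 := d0) (j1 := j1) u
  have hv := VL_get_idx (x := x) (d0 := d0) (j1 := j1) v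
  rw [← hu, ← hv]
  congr 1

variable {i}

lemma col_ed (v : Fin Δ → Bool) (j : Fin Δ) :
    col d0 i (ed x d0 v j) = colDir d0 i j := by
  unfold ed
  split_ifs with h1 h2
  · rw [col_pend, h1.2, colDir_d0]
  · rw [col_pend, h1.2, colDir_d0]
  · rw [col_cube]

lemma inl_mem_ed (v : Fin Δ → Bool) (j : Fin Δ) : (Sum.inl v : Vx Δ) ∈ ed x d0 v j := by
  unfold ed
  split_ifs with h1 h2
  · rw [h2]; exact Sym2.mem_mk_left _ _
  · rcases h1.1 with h | h
    · exact absurd h h2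
    · rw [h]; exact Sym2.mem_mk_left _ _
  · exact Sym2.mem_mk_left _ _

lemma ed_inj (hi : 1 ≤ i) {v : Fin Δ → Bool} {j j' : Fin Δ}
    (h : ed x d0 v j = ed x d0 v j') : j = j' := by
  have := congrArg (col d0 i) h
  rw [col_ed, col_ed] at this
  exact colDir_inj hi this

lemma mem_blk_of_dir {v : Fin Δ → Bool} {j : Fin Δ}
    (h : j ∈ pdirs x d0 v ++ cdirs x d0 j1 v) :
    ed x d0 v j ∈ blk x d0 j1 i v := by
  unfold blk
  rw [List.mem_append, (List.mergeSort_perm _ _).mem_iff]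
  exact Or.inr (List.mem_map_of_mem h)

lemma xe_mem_blk : (s(Sum.inl x, Sum.inr true) : Sym2 (Vx Δ)) ∈ blk x d0 j1 i x := by
  unfold blk
  rw [if_pos rfl]
  exact List.mem_append_left _ (by simp)

lemma ed_y_d0 : ed x d0 (flip x d0) d0 = s(Sum.inl (flip x d0), Sum.inr false) := by
  unfold ed
  rw [if_pos ⟨Or.inr rfl, rfl⟩, if_neg (flip_ne x d0)]

lemma ye_mem_blk :
    (s(Sum.inl (flip x d0), Sum.inr false) : Sym2 (Vx Δ)) ∈ blk x d0 j1 i (flip x d0) := by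
  rw [← ed_y_d0]
  exact mem_blk_of_dir (by simp [pdirs])

lemma mem_blk_elim {v : Fin Δ → Bool} {e : Sym2 (Vx Δ)} (he : e ∈ blk x d0 j1 i v) :
    (v = x ∧ e = s(Sum.inl x, Sum.inr true)) ∨
    (v = flip x d0 ∧ e = s(Sum.inl (flip x d0), Sum.inr false)) ∨
    ∃ j, ¬((v = x ∨ v = flip x d0) ∧ j = d0) ∧
      idx x d0 j1 v < idx x d0 j1 (flip v j) ∧
      e = s(Sum.inl v, Sum.inl (flip v j)) := by
  unfold blk at he
  rw [List.mem_append, (List.mergeSort_perm _ _).mem_iff] at he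
  rcases he with he | he
  · by_cases hv : v = x
    · rw [if_pos hv, List.mem_singleton] at he
      exact Or.inl ⟨hv, he⟩
    · rw [if_neg hv] at he; simp at he
  · rw [List.mem_map] at he
    obtain ⟨j, hj, rfl⟩ := he
    rw [List.mem_append] at hj
    rcases hj with hj | hj
    · unfold pdirs at hj
      by_cases hv : v = flip x d0
      · rw [if_pos hv, List.mem_singleton] at hj
        subst hj
        subst hv
        exact Or.inr (Or.inl ⟨rfl, ed_y_d0⟩)
      · rw [if_neg hv] at hj; simp at hj
    · unfold cdirs at hj
      rw [List.mem_filter] at hj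
      have hcond := of_decide_eq_true hj.2
      refine Or.inr (Or.inr ⟨j, hcond.1, hcond.2, ?_⟩)
      unfold ed
      rw [if_neg hcond.1]

lemma inl_mem_blk {v : Fin Δ → Bool} {e : Sym2 (Vx Δ)} (he : e ∈ blk x d0 j1 i v) :
    (Sum.inl v : Vx Δ) ∈ e := by
  rcases mem_blk_elim he with ⟨rfl, rfl⟩ | ⟨rfl, rfl⟩ | ⟨j, -, -, rfl⟩ <;>
    exact Sym2.mem_mk_left _ _

lemma blk_ed {v : Fin Δ → Bool} {e : Sym2 (Vx Δ)} (he : e ∈ blk x d0 j1 i v) :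
    ∃ j, e = ed x d0 v j := by
  rcases mem_blk_elim he with ⟨rfl, rfl⟩ | ⟨rfl, rfl⟩ | ⟨j, hc, -, rfl⟩
  · refine ⟨d0, ?_⟩
    unfold ed
    rw [if_pos ⟨Or.inl rfl, rfl⟩, if_pos rfl]
  · exact ⟨d0, ed_y_d0.symm⟩
  · refine ⟨j, ?_⟩
    unfold ed
    rw [if_neg hc]

lemma blk_subset_edgeSet {v : Fin Δ → Bool} {e : Sym2 (Vx Δ)} (he : e ∈ blk x d0 j1 i v) :
    e ∈ (plusGraph (hypercube Δ) x (flip x d0)).edgeSet := by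
  rw [edge_char x d0]
  rcases mem_blk_elim he with ⟨-, rfl⟩ | ⟨-, rfl⟩ | ⟨j, hc, -, rfl⟩
  · exact Or.inl rfl
  · exact Or.inr (Or.inl rfl)
  · exact Or.inr (Or.inr ⟨v, j, rfl, hc⟩)


lemma dirs_nodup (v : Fin Δ → Bool) : (pdirs x d0 v ++ cdirs x d0 j1 v).Nodup := by
  rw [List.nodup_append']
  refine ⟨?_, (List.nodup_finRange Δ).filter _, ?_⟩
  · unfold pdirs
    split_ifs <;> simp
  · intro a ha hb
    unfold pdirs at ha
    split_ifs at ha with hv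
    · rw [List.mem_singleton] at ha
      subst ha
      unfold cdirs at hb
      rw [List.mem_filter] at hb
      exact (of_decide_eq_true hb.2).1 ⟨Or.inr hv, rfl⟩
    · simp at ha

lemma xe_ne_cube {u w : Fin Δ → Bool} :
    (s(Sum.inl x, Sum.inr true) : Sym2 (Vx Δ)) ≠ s(Sum.inl u, Sum.inl w) := by
  rw [Ne, Sym2.eq_iff]
  rintro (⟨-, h⟩ | ⟨-, h⟩) <;> exact absurd h (by simp)

lemma ye_ne_cube {u w : Fin Δ → Bool} :
    (s(Sum.inl (flip x d0), Sum.inr false) : Sym2 (Vx Δ)) ≠ s(Sum.inl u, Sum.inl w) := by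
  rw [Ne, Sym2.eq_iff]
  rintro (⟨-, h⟩ | ⟨-, h⟩) <;> exact absurd h (by simp)

lemma xe_ne_ye :
    (s(Sum.inl x, Sum.inr true) : Sym2 (Vx Δ)) ≠ s(Sum.inl (flip x d0), Sum.inr false) := by
  rw [Ne, Sym2.eq_iff]
  rintro (⟨-, h⟩ | ⟨h, -⟩) <;> simp at h

lemma blk_nodup (hi : 1 ≤ i) (v : Fin Δ → Bool) : (blk x d0 j1 i v).Nodup := by
  unfold blk
  rw [List.nodup_append']
  refine ⟨?_, ?_, ?_⟩
  · split_ifs <;> simp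
  · rw [(List.mergeSort_perm _ _).nodup_iff]
    exact (dirs_nodup v).map_on (fun j _ j' _ h => ed_inj hi h)
  · intro a ha hb
    split_ifs at ha with hv
    · rw [List.mem_singleton] at ha
      subst ha
      rw [(List.mergeSort_perm _ _).mem_iff, List.mem_map] at hb
      obtain ⟨j, hj, hedj⟩ := hb
      rw [List.mem_append] at hj
      rcases hj with hj | hj
      · unfold pdirs at hj
        rw [if_neg (show ¬ v = flip x d0 by
          intro h; rw [hv] at h; exact (flip_ne x d0).symm h)] at hj
        simp at hj
      · unfold cdirs at hj
        rw [List.mem_filter] at hj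
        have hc := (of_decide_eq_true hj.2).1
        unfold ed at hedj
        rw [if_neg hc] at hedj
        exact xe_ne_cube hedj.symm
    · simp at ha

lemma blk_disjoint (hj1 : j1 ≠ d0) {u v : Fin Δ → Bool} (hne : u ≠ v)
    {e : Sym2 (Vx Δ)} (heu : e ∈ blk x d0 j1 i u) (hev : e ∈ blk x d0 j1 i v) : False := by
  rcases mem_blk_elim heu with ⟨hu1, he1⟩ | ⟨hu1, he1⟩ | ⟨j, -, hlt1, he1⟩ <;>
    rcases mem_blk_elim hev with ⟨hv1, he2⟩ | ⟨hv1, he2⟩ | ⟨j', -, hlt2, he2⟩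
  · exact hne (hu1.trans hv1.symm)
  · exact xe_ne_ye (he1.symm.trans he2)
  · exact xe_ne_cube (he1.symm.trans he2)
  · exact xe_ne_ye (he2.symm.trans he1)
  · exact hne (hu1.trans hv1.symm)
  · exact ye_ne_cube (he1.symm.trans he2)
  · exact xe_ne_cube (he2.symm.trans he1)
  · exact ye_ne_cube (he2.symm.trans he1)
  · rcases Sym2.eq_iff.mp (he1.symm.trans he2) with ⟨h1, -⟩ | ⟨h1, h2⟩
    · exact hne (Sum.inl.injEq .. ▸ h1)
    · rw [Sum.inl.injEq] at h1 h2
      rw [h2] at hlt1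
      rw [← h1] at hlt2
      omega

lemma sorted_pos {β : Type*} (key : β → ℕ) {l : List β}
    (hs : List.Pairwise (fun a b => key a ≤ key b) l) {p q : ℕ}
    (hp : p < l.length) (hq : q < l.length) (hlt : key l[q] < key l[p]) : q < p := by
  by_contra h
  push_neg at h
  rcases eq_or_lt_of_le h with h' | h'
  · subst h'
    exact absurd hlt (lt_irrefl _)
  · have := List.pairwise_iff_get.mp hs ⟨p, hp⟩ ⟨q, hq⟩ h'
    simp only [List.get_eq_getElem] at this
    omega

lemma blk_sorted (v : Fin Δ → Bool) :
    List.Pairwise (fun a b => col d0 i a ≤ col d0 i b)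
      (((pdirs x d0 v ++ cdirs x d0 j1 v).map (ed x d0 v)).mergeSort
        (fun e f => decide (col d0 i e ≤ col d0 i f))) := by
  have := List.pairwise_mergeSort
    (le := fun e f : Sym2 (Vx Δ) => decide (col d0 i e ≤ col d0 i f))
    (fun a b c hab hbc => decide_eq_true
      (le_trans (of_decide_eq_true hab) (of_decide_eq_true hbc)))
    (fun a b => by rcases le_total (col d0 i a) (col d0 i b) with h | h <;> simp [h])
    ((pdirs x d0 v ++ cdirs x d0 j1 v).map (ed x d0 v))
  exact this.imp (fun h => of_decide_eq_true h)

lemma blk_pos_lt (hi : 1 ≤ i) {v : Fin Δ → Bool} {p q : ℕ}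
    (hp : p < (blk x d0 j1 i v).length) (hq : q < (blk x d0 j1 i v).length)
    (hlt : col d0 i ((blk x d0 j1 i v)[q]) < col d0 i ((blk x d0 j1 i v)[p]))
    (hex : v = x → (blk x d0 j1 i v)[p] ≠ s(Sum.inl x, Sum.inr true)) : q < p := by
  by_cases hv : v = x
  · have hblk : blk x d0 j1 i v =
        s(Sum.inl x, Sum.inr true) ::
          (((pdirs x d0 v ++ cdirs x d0 j1 v).map (ed x d0 v)).mergeSort
            (fun e f => decide (col d0 i e ≤ col d0 i f))) := by
      unfold blk
      rw [if_pos hv]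
      rfl
    set S := ((pdirs x d0 v ++ cdirs x d0 j1 v).map (ed x d0 v)).mergeSort
        (fun e f => decide (col d0 i e ≤ col d0 i f)) with hS
    have hp' : p < S.length + 1 := by rw [hblk] at hp; simpa using hp
    have hq' : q < S.length + 1 := by rw [hblk] at hq; simpa using hq
    have hpne : p ≠ 0 := by
      intro h0
      apply hex hv
      subst h0
      simp [hblk]
    obtain ⟨p', rfl⟩ : ∃ p', p = p' + 1 := ⟨p - 1, by omega⟩
    rcases Nat.eq_zero_or_pos q with rfl | hq0
    · omega
    obtain ⟨q', rfl⟩ : ∃ q', q = q' + 1 := ⟨q - 1, by omega⟩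
    have e1 : (blk x d0 j1 i v)[q' + 1]'hq = S[q']'(by omega) := by simp [hblk]
    have e2 : (blk x d0 j1 i v)[p' + 1]'hp = S[p']'(by omega) := by simp [hblk]
    rw [e1, e2] at hlt
    have hsort := blk_sorted (x := x) (d0 := d0) (j1 := j1) (i := i) v
    rw [← hS] at hsort
    have := sorted_pos (col d0 i) hsort (by omega) (by omega) hlt
    omega
  · have hblk : blk x d0 j1 i v =
        ((pdirs x d0 v ++ cdirs x d0 j1 v).map (ed x d0 v)).mergeSort
          (fun e f => decide (col d0 i e ≤ col d0 i f)) := by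
      unfold blk
      rw [if_neg hv, List.nil_append]
    set S := ((pdirs x d0 v ++ cdirs x d0 j1 v).map (ed x d0 v)).mergeSort
        (fun e f => decide (col d0 i e ≤ col d0 i f)) with hS
    have hp' : p < S.length := by rw [hblk] at hp; exact hp
    have hq' : q < S.length := by rw [hblk] at hq; exact hq
    have e1 : (blk x d0 j1 i v)[q]'hq = S[q]'hq' := by simp [hblk]
    have e2 : (blk x d0 j1 i v)[p]'hp = S[p]'hp' := by simp [hblk]
    rw [e1, e2] at hlt
    have hsort := blk_sorted (x := x) (d0 := d0) (j1 := j1) (i := i) v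
    rw [← hS] at hsort
    exact sorted_pos (col d0 i) hsort hp' hq' hlt


lemma wt_flip_lt {u : Fin Δ → Bool} {jb : Fin Δ} (h : u jb ≠ x jb) :
    wt x (flip u jb) < wt x u := by
  apply Finset.card_lt_card
  constructor
  · intro l hl
    rw [Finset.mem_filter] at hl ⊢
    refine ⟨Finset.mem_univ _, ?_⟩
    by_cases hlj : l = jb
    · subst hlj
      rw [flip_self] at hl
      exfalso
      cases hu : u l <;> cases hx : x l <;> simp_all
    · rw [flip_ne_apply _ hlj] at hl
      exact hl.2
  · intro hsub
    have hjb : jb ∈ Finset.univ.filter (fun l => u l ≠ x l) := by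
      rw [Finset.mem_filter]; exact ⟨Finset.mem_univ _, h⟩
    have := hsub hjb
    rw [Finset.mem_filter, flip_self] at this
    have h2 := this.2
    cases hu : u jb <;> cases hx : x jb <;> simp_all

lemma VL_def : VL x d0 j1 = quadL x d0 j1 ++ restL x d0 j1 := rfl

lemma quadL_length : (quadL x d0 j1).length = 4 := rfl

lemma restL_sorted :
    List.Pairwise (fun a b => wt x a ≤ wt x b) (restL x d0 j1) := by
  have := List.pairwise_mergeSort
    (le := fun u v : Fin Δ → Bool => decide (wt x u ≤ wt x v))
    (fun a b c hab hbc => decide_eq_true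
      (le_trans (of_decide_eq_true hab) (of_decide_eq_true hbc)))
    (fun a b => by rcases le_total (wt x a) (wt x b) with h | h <;> simp [h])
    ((Finset.univ.toList (α := Fin Δ → Bool)).filter (fun u => decide (u ∉ quadL x d0 j1)))
  exact this.imp (fun h => of_decide_eq_true h)

lemma v1_ne_x (hj1 : j1 ≠ d0) : flip x j1 ≠ x := flip_ne x j1

lemma v1_ne_y (hj1 : j1 ≠ d0) : flip x j1 ≠ flip x d0 := by
  intro h
  have := congrFun h j1
  rw [flip_self, flip_ne_apply _ hj1] at this
  simp at this

lemma enp (hj1 : j1 ≠ d0) {b : ℕ} (hb : b < (VL x d0 j1).length) (hb0 : 0 < b) :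
    ∃ s, ∃ hs : s < (VL x d0 j1).length, s < b ∧ ∃ j₀,
      flip ((VL x d0 j1)[s]'hs) j₀ = (VL x d0 j1)[b]'hb ∧
      ¬(((VL x d0 j1)[s]'hs = x ∨ (VL x d0 j1)[s]'hs = flip x d0) ∧ j₀ = d0) := by
  have hlen : (VL x d0 j1).length = 4 + (restL x d0 j1).length := by
    rw [VL_def, List.length_append, quadL_length]
  have hquad_get : ∀ (s : ℕ) (hs : s < 4),
      (VL x d0 j1)[s]'(by omega) = (quadL x d0 j1)[s]'(by rw [quadL_length]; omega) := by
    intro s hs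
    simp only [VL_def]
    exact List.getElem_append_left (by rw [quadL_length]; omega)
  by_cases hb4 : b < 4
  · interval_cases b
    · refine ⟨0, by omega, by omega, j1, ?_, ?_⟩
      · rw [hquad_get 0 (by omega), hquad_get 1 (by omega)]
        rfl
      · rintro ⟨-, h⟩
        exact hj1 h
    · refine ⟨1, by omega, by omega, d0, ?_, ?_⟩
      · rw [hquad_get 1 (by omega), hquad_get 2 (by omega)]
        rfl
      · rw [hquad_get 1 (by omega)]
        rintro ⟨h | h, -⟩
        · exact v1_ne_x hj1 h
        · exact v1_ne_y hj1 h
    · refine ⟨2, by omega, by omega, j1, ?_, ?_⟩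
      · rw [hquad_get 2 (by omega), hquad_get 3 (by omega)]
        show flip (flip (flip x j1) d0) j1 = flip x d0
        rw [flip_comm _ (Ne.symm hj1), flip_flip]
      · rintro ⟨-, h⟩
        exact hj1 h
  · push_neg at hb4
    have hbr : b - 4 < (restL x d0 j1).length := by omega
    have hub : (VL x d0 j1)[b]'hb = (restL x d0 j1)[b - 4]'hbr := by
      simp only [VL_def]
      exact List.getElem_append_right (by rw [quadL_length]; omega)
    set u := (restL x d0 j1)[b - 4]'hbr with hu
    have humem : u ∈ restL x d0 j1 := by rw [hu]; exact List.getElem_mem _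
    have hunq : u ∉ quadL x d0 j1 := mem_restL_iff.mp humem
    have hux : u ≠ x := by
      intro h
      exact hunq (by rw [h]; simp [quadL])
    obtain ⟨jb, hjb⟩ : ∃ jb, u jb ≠ x jb := by
      by_contra hcc
      push_neg at hcc
      exact hux (funext hcc)
    set u' := flip u jb with hu'
    have hflip : flip u' jb = u := by rw [hu', flip_flip]
    have hcond : ¬((u' = x ∨ u' = flip x d0) ∧ jb = d0) := by
      rintro ⟨h | h, rfl⟩
      · apply hunq
        have : u = flip x jb := by rw [← h, hflip]
        rw [this]
        simp [quadL]
      · apply hunq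
        have : u = flip (flip x jb) jb := by rw [← h, hflip]
        rw [this, flip_flip]
        simp [quadL]
    by_cases hq : u' ∈ quadL x d0 j1
    · obtain ⟨s, hs4, hsget⟩ := List.mem_iff_getElem.mp hq
      rw [quadL_length] at hs4
      refine ⟨s, by omega, by omega, jb, ?_, ?_⟩
      · rw [hquad_get s hs4, hsget, hflip, hub]
      · rw [hquad_get s hs4, hsget]
        exact hcond
    · have hur : u' ∈ restL x d0 j1 := mem_restL_iff.mpr hq
      obtain ⟨q', hq'len, hq'get⟩ := List.mem_iff_getElem.mp hur
      have hwlt : wt x u' < wt x u := wt_flip_lt hjb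
      have hqlt : q' < b - 4 := by
        apply sorted_pos (wt x) restL_sorted hbr hq'len
        rw [hq'get, ← hu]
        exact hwlt
      refine ⟨q' + 4, by omega, by omega, jb, ?_, ?_⟩
      · have : (VL x d0 j1)[q' + 4]'(by omega) = (restL x d0 j1)[q']'hq'len := by
          simp only [VL_def]
          have := List.getElem_append_right (as := quadL x d0 j1)
            (bs := restL x d0 j1) (i := q' + 4) (by rw [quadL_length]; omega)
            (h₂ := by rw [List.length_append, quadL_length]; omega)
          rw [this]
          congr 1
        rw [this, hq'get, hflip, hub]
      · have : (VL x d0 j1)[q' + 4]'(by omega) = (restL x d0 j1)[q']'hq'len := by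
          simp only [VL_def]
          have := List.getElem_append_right (as := quadL x d0 j1)
            (bs := restL x d0 j1) (i := q' + 4) (by rw [quadL_length]; omega)
            (h₂ := by rw [List.length_append, quadL_length]; omega)
          rw [this]
          congr 1
        rw [this, hq'get]
        exact hcond


lemma LL_nodup (hj1 : j1 ≠ d0) (hi : 1 ≤ i) : (LL x d0 j1 i).Nodup := by
  unfold LL
  rw [List.flatMap_def, List.nodup_flatten]
  constructor
  · intro l hl
    rw [List.mem_map] at hl
    obtain ⟨v, -, rfl⟩ := hl
    exact blk_nodup hi v
  · rw [List.pairwise_map]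
    exact (VL_nodup hj1).imp (fun hne e he1 he2 => blk_disjoint hj1 hne he1 he2)

lemma LL_mem (hj1 : j1 ≠ d0) (e : Sym2 (Vx Δ)) :
    e ∈ LL x d0 j1 i ↔ e ∈ (plusGraph (hypercube Δ) x (flip x d0)).edgeSet := by
  unfold LL
  rw [List.mem_flatMap]
  constructor
  · rintro ⟨v, -, hv⟩
    exact blk_subset_edgeSet hv
  · intro he
    rcases (edge_char x d0 e).mp he with rfl | rfl | ⟨u, j, rfl, hcond⟩
    · exact ⟨x, mem_VL x, xe_mem_blk⟩
    · exact ⟨flip x d0, mem_VL _, ye_mem_blk⟩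
    · set w := flip u j with hw
      have huw : u ≠ w := (flip_ne u j).symm
      have hidx : idx x d0 j1 u ≠ idx x d0 j1 w := fun h => huw (idx_inj hj1 h)
      rcases lt_or_gt_of_ne hidx with hlt | hlt
      · refine ⟨u, mem_VL u, ?_⟩
        have hj : j ∈ cdirs x d0 j1 u := by
          unfold cdirs
          rw [List.mem_filter]
          exact ⟨List.mem_finRange j, decide_eq_true ⟨hcond, hlt⟩⟩
        have : ed x d0 u j = s(Sum.inl u, Sum.inl (flip u j)) := by
          unfold ed
          rw [if_neg hcond]
        rw [← this]
        exact mem_blk_of_dir (List.mem_append_right _ hj)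
      · refine ⟨w, mem_VL w, ?_⟩
        have hflipw : flip w j = u := by rw [hw, flip_flip]
        have hcondw : ¬((w = x ∨ w = flip x d0) ∧ j = d0) := by
          rintro ⟨h | h, hjd⟩
          · refine hcond ⟨Or.inr ?_, hjd⟩
            rw [← hflipw, h, hjd]
          · refine hcond ⟨Or.inl ?_, hjd⟩
            rw [← hflipw, h, hjd, flip_flip]
        have hj : j ∈ cdirs x d0 j1 w := by
          unfold cdirs
          rw [List.mem_filter]
          refine ⟨List.mem_finRange j, decide_eq_true ⟨hcondw, ?_⟩⟩
          rw [hflipw]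
          exact hlt
        have : ed x d0 w j = s(Sum.inl w, Sum.inl (flip w j)) := by
          unfold ed
          rw [if_neg hcondw]
        have h2 : s(Sum.inl u, Sum.inl w) = ed x d0 w j := by
          rw [this, hflipw, Sym2.eq_swap]
        rw [h2]
        exact mem_blk_of_dir (List.mem_append_right _ hj)

lemma LL_head : ∃ T, LL x d0 j1 i = s(Sum.inl x, Sum.inr true) :: T := by
  have h1 : VL x d0 j1 = x :: ([flip x j1, flip (flip x j1) d0, flip x d0] ++ restL x d0 j1) := rfl
  have hblkx : blk x d0 j1 i x = s(Sum.inl x, Sum.inr true) ::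
      (((pdirs x d0 x ++ cdirs x d0 j1 x).map (ed x d0 x)).mergeSort
        (fun e f => decide (col d0 i e ≤ col d0 i f))) := by
    unfold blk
    rw [if_pos rfl]
    rfl
  refine ⟨(((pdirs x d0 x ++ cdirs x d0 j1 x).map (ed x d0 x)).mergeSort
      (fun e f => decide (col d0 i e ≤ col d0 i f))) ++
      ([flip x j1, flip (flip x j1) d0, flip x d0] ++ restL x d0 j1).flatMap
        (blk x d0 j1 i), ?_⟩
  unfold LL
  rw [h1, List.flatMap_cons, hblkx]
  rfl

lemma LL_decomp {t : ℕ} (ht : t < (LL x d0 j1 i).length) :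
    ∃ b, ∃ hb : b < (VL x d0 j1).length, ∃ p,
      ∃ hp : p < (blk x d0 j1 i ((VL x d0 j1)[b]'hb)).length,
      (LL x d0 j1 i)[t]'ht = (blk x d0 j1 i ((VL x d0 j1)[b]'hb))[p]'hp ∧
      (LL x d0 j1 i).take t =
        (((VL x d0 j1).take b).map (blk x d0 j1 i)).flatten ++
          (blk x d0 j1 i ((VL x d0 j1)[b]'hb)).take p := by
  have hL : LL x d0 j1 i = ((VL x d0 j1).map (blk x d0 j1 i)).flatten := by
    unfold LL
    rw [List.flatMap_def]
  rw [hL] at ht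
  obtain ⟨b, hb, p, hp, hget, htake⟩ := flatten_decomp _ t ht
  rw [List.length_map] at hb
  have hmap : ((VL x d0 j1).map (blk x d0 j1 i))[b]'(by rw [List.length_map]; exact hb) =
      blk x d0 j1 i ((VL x d0 j1)[b]'hb) := List.getElem_map _
  refine ⟨b, hb, p, ?_, ?_, ?_⟩
  · rw [← hmap]; exact hp
  · have : (LL x d0 j1 i)[t]'(by rw [hL]; exact ht) =
        (((VL x d0 j1).map (blk x d0 j1 i)).flatten)[t]'ht := by simp [hL]
    rw [this, hget]
    congr 1
  · have h2 : (LL x d0 j1 i).take t = (((VL x d0 j1).map (blk x d0 j1 i)).flatten).take t := by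
      rw [hL]
    rw [h2, htake, List.map_take]
    congr 1
    rw [hmap]


lemma LL_hc (hj1 : j1 ≠ d0) {t : ℕ} (ht : t < (LL x d0 j1 i).length)
    (ht0 : 0 < t) :
    ∃ f ∈ (LL x d0 j1 i).take t, Shares ((LL x d0 j1 i)[t]'ht) f := by
  obtain ⟨b, hb, p, hp, hget, htake⟩ := LL_decomp ht
  set v := (VL x d0 j1)[b]'hb with hv
  have hemem : (LL x d0 j1 i)[t]'ht ∈ blk x d0 j1 i v := by
    rw [hget]; exact List.getElem_mem _
  rcases Nat.eq_zero_or_pos p with rfl | hp0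
  · have hb0 : 0 < b := by
      rcases Nat.eq_zero_or_pos b with rfl | h
      · exfalso
        simp only [List.take_zero, List.flatten_nil, List.append_nil,
          List.map_nil] at htake
        have hlen := congrArg List.length htake
        rw [List.length_take] at hlen
        simp only [List.length_nil] at hlen
        omega
      · exact h
    obtain ⟨s, hs, hsb, j₀, hflip, hcond⟩ := enp hj1 hb hb0
    set u := (VL x d0 j1)[s]'hs with hu2
    have hcd : j₀ ∈ cdirs x d0 j1 u := by
      unfold cdirs
      rw [List.mem_filter]
      refine ⟨List.mem_finRange _, decide_eq_true ⟨hcond, ?_⟩⟩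
      have h1 : idx x d0 j1 u = s := by rw [hu2]; exact idx_getElem hj1 hs
      have h2 : idx x d0 j1 (flip u j₀) = b := by rw [hflip]; exact idx_getElem hj1 hb
      omega
    have hf : ed x d0 u j₀ ∈ blk x d0 j1 i u :=
      mem_blk_of_dir (List.mem_append_right _ hcd)
    have hedcube : ed x d0 u j₀ = s(Sum.inl u, Sum.inl (flip u j₀)) := by
      unfold ed
      rw [if_neg hcond]
    refine ⟨ed x d0 u j₀, ?_, ?_⟩
    · rw [htake]
      apply List.mem_append_left
      rw [List.mem_flatten]
      refine ⟨blk x d0 j1 i u, ?_, hf⟩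
      rw [List.mem_map]
      exact ⟨u, List.mem_take_iff_getElem.mpr ⟨s, by omega, hu2.symm⟩, rfl⟩
    · refine ⟨Sum.inl v, inl_mem_blk hemem, ?_⟩
      rw [hedcube, hflip]
      exact Sym2.mem_mk_right _ _
  · have hq : p - 1 < (blk x d0 j1 i v).length := by omega
    refine ⟨(blk x d0 j1 i v)[p-1]'hq, ?_, ?_⟩
    · rw [htake]
      exact List.mem_append_right _ (List.mem_take_iff_getElem.mpr ⟨p - 1, by omega, rfl⟩)
    · exact ⟨Sum.inl v, inl_mem_blk hemem, inl_mem_blk (List.getElem_mem _)⟩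

lemma LL_hj (hj1 : j1 ≠ d0) (hi : 1 ≤ i) (hiΔ : i ≤ Δ) {t : ℕ}
    (ht : t < (LL x d0 j1 i).length) (ht0 : 0 < t) {j : ℕ} (hjge : 1 ≤ j)
    (hjlt : j < col d0 i ((LL x d0 j1 i)[t]'ht)) :
    ∃ f ∈ (LL x d0 j1 i).take t,
      Shares ((LL x d0 j1 i)[t]'ht) f ∧ col d0 i f = j := by
  obtain ⟨b, hb, p, hp, hget, htake⟩ := LL_decomp ht
  set v := (VL x d0 j1)[b]'hb with hv
  set e := (LL x d0 j1 i)[t]'ht with hee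
  have hemem : e ∈ blk x d0 j1 i v := hget.symm ▸ List.getElem_mem _
  have hcolb : col d0 i e ≤ Δ :=
    (col_bounds (x := x) (d0 := d0) hi hiΔ e (blk_subset_edgeSet hemem)).2
  obtain ⟨j', hj'⟩ := colDir_surj (d0 := d0) hi hiΔ hjge (by omega)
  set f := ed x d0 v j' with hfdef
  have hcolf : col d0 i f = j := by rw [hfdef, col_ed, hj']
  have hshare : Shares e f := ⟨Sum.inl v, inl_mem_blk hemem, inl_mem_ed v j'⟩
  have hexe : e ≠ s(Sum.inl x, Sum.inr true) := by
    obtain ⟨T, hT⟩ := LL_head (x := x) (d0 := d0) (j1 := j1) (i := i)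
    intro hcontra
    have h0 : (LL x d0 j1 i)[0]'(by omega) = s(Sum.inl x, Sum.inr true) := by
      simp [hT]
    have ht00 : t = 0 := (LL_nodup hj1 hi).getElem_inj_iff.mp (by
      rw [h0, ← hcontra, hee])
    omega
  by_cases hfin : f ∈ blk x d0 j1 i v
  · obtain ⟨q, hqlen, hqget⟩ := List.mem_iff_getElem.mp hfin
    have hqp : q < p := by
      apply blk_pos_lt hi hp hqlen
      · rw [hqget, hcolf]
        have hpe : (blk x d0 j1 i v)[p]'hp = e := hget.symm
        rw [hpe]
        exact hjlt
      · intro _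
        have hpe : (blk x d0 j1 i v)[p]'hp = e := hget.symm
        rw [hpe]
        exact hexe
    refine ⟨f, ?_, hshare, hcolf⟩
    rw [htake]
    exact List.mem_append_right _ (List.mem_take_iff_getElem.mpr ⟨q, by omega, hqget⟩)
  · have hcond' : ¬((v = x ∨ v = flip x d0) ∧ j' = d0) := by
      rintro ⟨hvv | hvv, hjd⟩
      · apply hfin
        have hfx : f = s(Sum.inl x, Sum.inr true) := by
          rw [hfdef]
          unfold ed
          rw [if_pos ⟨Or.inl hvv, hjd⟩, if_pos hvv]
        rw [hfx, hvv]
        exact xe_mem_blk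
      · apply hfin
        have hfy : f = s(Sum.inl (flip x d0), Sum.inr false) := by
          rw [hfdef]
          unfold ed
          rw [if_pos ⟨Or.inr hvv, hjd⟩,
            if_neg (show ¬ v = x from fun h => (flip_ne x d0).symm (h ▸ hvv))]
        rw [hfy, hvv]
        exact ye_mem_blk
    have hedf : f = s(Sum.inl v, Sum.inl (flip v j')) := by
      rw [hfdef]
      unfold ed
      rw [if_neg hcond']
    set w := flip v j' with hwdef
    have hjnotc : j' ∉ cdirs x d0 j1 v := fun hc =>
      hfin (hfdef ▸ mem_blk_of_dir (List.mem_append_right _ hc))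
    have hnlt : ¬(idx x d0 j1 v < idx x d0 j1 w) := by
      intro hlt
      apply hjnotc
      unfold cdirs
      rw [List.mem_filter]
      exact ⟨List.mem_finRange _, decide_eq_true ⟨hcond', hlt⟩⟩
    have hwv : w ≠ v := by rw [hwdef]; exact flip_ne v j'
    have hidxlt : idx x d0 j1 w < idx x d0 j1 v := by
      rcases lt_or_gt_of_ne (fun h => hwv (idx_inj hj1 h)) with h | h
      · exact h
      · exact absurd h hnlt
    have hflipw : flip w j' = v := by rw [hwdef, flip_flip]
    have hcondw : ¬((w = x ∨ w = flip x d0) ∧ j' = d0) := by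
      rintro ⟨h | h, hjd⟩
      · refine hcond' ⟨Or.inr ?_, hjd⟩
        rw [← hflipw, h, hjd]
      · refine hcond' ⟨Or.inl ?_, hjd⟩
        rw [← hflipw, h, hjd, flip_flip]
    have hcw : j' ∈ cdirs x d0 j1 w := by
      unfold cdirs
      rw [List.mem_filter]
      refine ⟨List.mem_finRange _, decide_eq_true ⟨hcondw, ?_⟩⟩
      rw [hflipw]
      exact hidxlt
    have hfw : ed x d0 w j' ∈ blk x d0 j1 i w :=
      mem_blk_of_dir (List.mem_append_right _ hcw)
    have hfeq : ed x d0 w j' = f := by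
      unfold ed
      rw [if_neg hcondw, hflipw, hedf, Sym2.eq_swap]
    have hidxv : idx x d0 j1 v = b := by rw [hv]; exact idx_getElem hj1 hb
    refine ⟨f, ?_, hshare, hcolf⟩
    rw [htake]
    apply List.mem_append_left
    rw [List.mem_flatten]
    refine ⟨blk x d0 j1 i w, ?_, hfeq ▸ hfw⟩
    rw [List.mem_map]
    refine ⟨w, ?_, rfl⟩
    refine List.mem_take_iff_getElem.mpr ⟨idx x d0 j1 w, ?_, VL_get_idx w⟩
    have := idx_lt (x := x) (d0 := d0) (j1 := j1) w
    omega

end XD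
end GreedyEdge


open GreedyEdge in
/-- For `Δ ≥ 3` and any colour `i ∈ {1,…,Δ}`, there is a connected ordering of
the edges of `Q_Δ⁺` starting with the pendant edge `xx'` such that precolouring
`xx'` with `i` and greedily colouring the remaining edges in order yields a
proper edge colouring with colours in `{1,…,Δ}`. -/
theorem plus_hypercube_greedy_from_precoloured_edge (Δ : ℕ) (hΔ : 3 ≤ Δ)
    (x y : Fin Δ → Bool) (hxy : (hypercube Δ).Adj x y)
    (i : ℕ) (hi : 1 ≤ i) (hiΔ : i ≤ Δ) :
    ∃ L : List (Sym2 ((Fin Δ → Bool) ⊕ Bool)),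
      ConnOrder (plusGraph (hypercube Δ) x y) L ∧
      L.head? = some s(Sum.inl x, Sum.inr true) ∧
      IsProperEdgeCol (plusGraph (hypercube Δ) x y)
        (greedyExtend
          (Function.update (fun _ => 0) s(Sum.inl x, Sum.inr true) i) L.tail)
        Δ := by
  classical
  obtain ⟨d0, hy⟩ : ∃ d0, y = flip x d0 := hyperAdj_iff.mp hxy
  subst hy
  have hΔ0 : 0 < Δ := by omega
  set j1 : Fin Δ := if (d0 : ℕ) = 0 then ⟨1, by omega⟩ else ⟨0, by omega⟩ with hj1def
  have hj1 : j1 ≠ d0 := by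
    have hval : (j1 : ℕ) ≠ (d0 : ℕ) := by
      rw [hj1def]
      split_ifs with h
      · simp [h]
      · simpa using Ne.symm h
    exact fun h => hval (congrArg Fin.val h)
  obtain ⟨T, hT⟩ := LL_head (x := x) (d0 := d0) (j1 := j1) (i := i)
  have hLcons : LL x d0 j1 i = s(Sum.inl x, Sum.inr true) :: T := hT
  refine ⟨LL x d0 j1 i, ⟨LL_nodup hj1 hi, fun e => LL_mem hj1 e, ?_⟩, ?_, ?_⟩
  · intro t ht0
    obtain ⟨f, hfmem, hfsh⟩ := LL_hc (i := i) hj1 t.isLt ht0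
    obtain ⟨q, hq, hqget⟩ := List.mem_take_iff_getElem.mp hfmem
    refine ⟨⟨q, by omega⟩, by simpa using (by omega : q < (t : ℕ)), ?_⟩
    simp only [List.get_eq_getElem]
    rw [hqget]
    exact hfsh
  · rw [hT]; rfl
  · have htail : (LL x d0 j1 i).tail = T := by rw [hT]; rfl
    have hcolxe : col d0 i (s(Sum.inl x, Sum.inr true) : Sym2 (Vx Δ)) = i := col_pend x true
    have key := greedy_realize (col d0 i) T [s(Sum.inl x, Sum.inr true)]
      (Function.update (fun _ => 0) s(Sum.inl x, Sum.inr true) i)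
      (by
        intro f hf
        rw [List.mem_singleton] at hf
        subst hf
        rw [Function.update_self, hcolxe])
      (by
        intro f hf
        rw [List.mem_singleton] at hf
        rw [Function.update_of_ne hf])
      (by rw [List.singleton_append, ← hLcons]; exact LL_nodup hj1 hi)
      (by
        intro e he
        rw [List.singleton_append, ← hLcons] at he
        exact (col_bounds x d0 hi hiΔ e ((LL_mem hj1 e).mp he)).1)
      (by
        intro e f he hf hne hsh
        rw [List.singleton_append, ← hLcons] at he hf
        exact col_proper x d0 hi e ((LL_mem hj1 e).mp he) f ((LL_mem hj1 f).mp hf) hne hsh)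
      (by
        intro p hp j hjge hjlt
        have hp1 : p + 1 < (LL x d0 j1 i).length := by rw [hLcons]; simpa using hp
        have hLp : (LL x d0 j1 i)[p + 1]'hp1 = T[p]'hp := by
          simp [hLcons]
        obtain ⟨f, hfmem, hfsh, hfc⟩ := LL_hj hj1 hi hiΔ hp1 (by omega)
          hjge (by rw [hLp]; exact hjlt)
        refine ⟨f, ?_, by rw [← hLp]; exact hfsh, hfc⟩
        have htk : (LL x d0 j1 i).take (p + 1) =
            s(Sum.inl x, Sum.inr true) :: T.take p := by
          rw [hLcons]
          rfl
        rw [htk] at hfmem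
        simpa using hfmem)
    have hsplit : [s(Sum.inl x, Sum.inr true)] ++ T = LL x d0 j1 i := by
      rw [hLcons]; rfl
    constructor
    · intro e he
      have heL : e ∈ LL x d0 j1 i := (LL_mem hj1 e).mpr he
      have hg := key.1 e (by rw [hsplit]; exact heL)
      rw [htail, hg]
      exact col_bounds x d0 hi hiΔ e he
    · intro e he f hf hne hsh
      have heL : e ∈ LL x d0 j1 i := (LL_mem hj1 e).mpr he
      have hfL : f ∈ LL x d0 j1 i := (LL_mem hj1 f).mpr hf
      have hge := key.1 e (by rw [hsplit]; exact heL)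
      have hgf := key.1 f (by rw [hsplit]; exact hfL)
      rw [htail, hge, hgf]
      exact col_proper x d0 hi e he f hf hne hsh
end

section
/- Let d ≥ 1 and let G be a finite connected d-regular simple graph admitting a proper edge colouring α : E(G) → {1,…,d}. Then there exists a connected ordering of the edges of G such that the greedy edge colouring following this ordering is exactly α. -/
attribute [local instance] Classical.propDecidable

namespace GreedyEdgeAux

open GreedyEdge

variable {V : Type*}

/-- A "good" list of edges: pairwise distinct edges of `G` such that each edge
shares an endpoint with an earlier one (if there is an earlier one), and for
each colour `k` below the α-colour of the edge, some earlier edge sharing an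
endpoint with it has α-colour `k`. -/
def Good (G : SimpleGraph V) (α : Sym2 V → ℕ) (L : List (Sym2 V)) : Prop :=
  L.Nodup ∧ (∀ e ∈ L, e ∈ G.edgeSet) ∧
    ∀ l₁ e l₂, L = l₁ ++ e :: l₂ →
      (l₁ ≠ [] → ∃ f ∈ l₁, Shares e f) ∧
      ∀ k, 1 ≤ k → k < α e → ∃ f ∈ l₁, Shares e f ∧ α f = k

lemma good_prefix {G : SimpleGraph V} {α : Sym2 V → ℕ} {l : List (Sym2 V)} {e : Sym2 V}
    (h : Good G α (l ++ [e])) : Good G α l := by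
  obtain ⟨hnd, hmem, hsplit⟩ := h
  refine ⟨(List.nodup_append.1 hnd).1, fun f hf => hmem f (by simp [hf]), ?_⟩
  intro l₁ f l₂ hL
  exact hsplit l₁ f (l₂ ++ [e]) (by rw [hL]; simp)

lemma greedyExtend_eq {G : SimpleGraph V} {α : Sym2 V → ℕ}
    (h1 : ∀ e ∈ G.edgeSet, 1 ≤ α e)
    (h2 : ∀ e ∈ G.edgeSet, ∀ f ∈ G.edgeSet, e ≠ f → Shares e f → α e ≠ α f) :
    ∀ L : List (Sym2 V), Good G α L →
      ∀ f, greedyExtend (fun _ => 0) L f = if f ∈ L then α f else 0 := by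
  intro L
  induction L using List.reverseRecOn with
  | nil => intro _ f; simp [greedyExtend]
  | append_singleton l e ih =>
    intro hL f
    have hgl := good_prefix hL
    have hstep : greedyExtend (fun _ => 0) (l ++ [e]) =
        step (greedyExtend (fun _ => 0) l) e := by
      simp [greedyExtend, List.foldl_append]
    set c : Sym2 V → ℕ := greedyExtend (fun _ => 0) l with hc
    have hcval : ∀ g, c g = if g ∈ l then α g else 0 := ih hgl
    have hel : e ∉ l := fun hm => (List.nodup_append.1 hL.1).2.2 e hm e (by simp) rfl
    have heE : e ∈ G.edgeSet := hL.2.1 e (by simp)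
    have hblock := (hL.2.2 l e [] rfl).2
    set S : Set ℕ := {k : ℕ | 1 ≤ k ∧ ∀ g : Sym2 V, Shares e g → c g ≠ k} with hS
    have hmemS : α e ∈ S := by
      refine ⟨h1 e heE, fun g hg => ?_⟩
      rw [hcval g]
      by_cases hgl' : g ∈ l
      · have hgE : g ∈ G.edgeSet := hgl.2.1 g hgl'
        have hne : e ≠ g := fun h => hel (h ▸ hgl')
        simp only [if_pos hgl']
        exact fun h => h2 e heE g hgE hne hg h.symm
      · simp only [if_neg hgl']
        have := h1 e heE
        omega
    have hlow : ∀ k, k < α e → k ∉ S := by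
      rintro k hk ⟨hk1, hb⟩
      obtain ⟨g, hgl', hgsh, hgk⟩ := hblock k hk1 hk
      exact hb g hgsh (by rw [hcval g, if_pos hgl', hgk])
    have hsInf : sInf S = α e := by
      have h₁ : sInf S ∈ S := Nat.sInf_mem ⟨α e, hmemS⟩
      have h₂ : sInf S ≤ α e := Nat.sInf_le hmemS
      rcases lt_or_eq_of_le h₂ with h | h
      · exact absurd h₁ (hlow _ h)
      · exact h
    rw [hstep]
    show Function.update c e (sInf S) f = _
    rw [Function.update_apply]
    by_cases hfe : f = e
    · subst hfe
      rw [if_pos rfl, if_pos (by simp), hsInf]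
    · rw [if_neg hfe, hcval f]
      have : (f ∈ l ++ [e]) ↔ f ∈ l := by simp [hfe]
      by_cases hfl : f ∈ l
      · rw [if_pos hfl, if_pos (this.2 hfl)]
      · rw [if_neg hfl, if_neg (fun h => hfl (this.1 h))]

lemma exists_colour_at [Fintype V] {d : ℕ} {G : SimpleGraph V}
    (hreg : G.IsRegularOfDegree d) {α : Sym2 V → ℕ} (hα : IsProperEdgeCol G α d)
    (x : V) {k : ℕ} (hk1 : 1 ≤ k) (hkd : k ≤ d) :
    ∃ e ∈ G.edgeSet, x ∈ e ∧ α e = k := by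
  classical
  have hmemI : ∀ e, e ∈ G.incidenceFinset x ↔ e ∈ G.edgeSet ∧ x ∈ e := by
    intro e
    rw [SimpleGraph.mem_incidenceFinset]
    rfl
  have hcard : (G.incidenceFinset x).card = d := by
    rw [SimpleGraph.card_incidenceFinset_eq_degree]; exact hreg x
  have hinj : Set.InjOn α (G.incidenceFinset x : Set (Sym2 V)) := by
    intro e he f hf hef
    by_contra hne
    have he' := (hmemI e).1 (by exact_mod_cast he)
    have hf' := (hmemI f).1 (by exact_mod_cast hf)
    exact hα.2 e he'.1 f hf'.1 hne ⟨x, he'.2, hf'.2⟩ hef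
  have hsub : (G.incidenceFinset x).image α ⊆ Finset.Icc 1 d := by
    intro m hm
    obtain ⟨e, he, rfl⟩ := Finset.mem_image.1 hm
    have he' := (hmemI e).1 he
    exact Finset.mem_Icc.2 (hα.1 e he'.1)
  have hcard' : ((G.incidenceFinset x).image α).card = d := by
    rw [Finset.card_image_of_injOn hinj, hcard]
  have heq : (G.incidenceFinset x).image α = Finset.Icc 1 d := by
    apply Finset.eq_of_subset_of_card_le hsub
    rw [hcard', Nat.card_Icc]
    omega
  have hk : k ∈ (G.incidenceFinset x).image α := by
    rw [heq]; exact Finset.mem_Icc.2 ⟨hk1, hkd⟩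
  obtain ⟨e, he, hek⟩ := Finset.mem_image.1 hk
  have he' := (hmemI e).1 he
  exact ⟨e, he'.1, he'.2, hek⟩

lemma walk_cross {G : SimpleGraph V} {A : Set V} :
    ∀ {u a : V}, G.Walk u a → u ∉ A → a ∈ A →
      ∃ x y, G.Adj x y ∧ x ∉ A ∧ y ∈ A := by
  intro u a p
  induction p with
  | nil => intro h h'; exact absurd h' h
  | @cons u w a h p ih =>
    intro hu ha
    by_cases hw : w ∈ A
    · exact ⟨u, w, h, hu, hw⟩
    · exact ih hw ha

end GreedyEdgeAux

open GreedyEdge GreedyEdgeAux in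
/-- If `G` is a finite connected `d`-regular simple graph admitting a proper
edge colouring `α` with colours in `{1,…,d}`, then some connected ordering of
the edges has greedy colouring exactly `α`. -/
theorem regular_connected_greedy_realises_colouring {V : Type*} [Fintype V]
    (d : ℕ) (hd : 1 ≤ d) (G : SimpleGraph V) (hG : G.Connected)
    (hreg : G.IsRegularOfDegree d) (α : Sym2 V → ℕ)
    (hα : IsProperEdgeCol G α d) :
    ∃ L : List (Sym2 V), ConnOrder G L ∧ ∀ e ∈ G.edgeSet, greedy L e = α e := by
  classical
  have h1 : ∀ e ∈ G.edgeSet, 1 ≤ α e := fun e he => (hα.1 e he).1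
  have hle : ∀ e ∈ G.edgeSet, α e ≤ d := fun e he => (hα.1 e he).2
  have h2 := hα.2
  -- a good singleton list exists
  have hV : Nonempty V := hG.nonempty
  obtain ⟨v⟩ := hV
  obtain ⟨e₁, he₁E, _, he₁c⟩ := exists_colour_at hreg hα v le_rfl hd
  have hsingle : Good G α [e₁] := by
    refine ⟨List.nodup_singleton e₁, by simpa using he₁E, ?_⟩
    intro l₁ e l₂ h
    rcases l₁ with _ | ⟨a, l₁⟩
    · simp only [List.nil_append, List.cons.injEq] at h
      obtain ⟨rfl, rfl⟩ := h
      exact ⟨fun h => absurd rfl h, fun k hk1 hk2 => by rw [he₁c] at hk2; omega⟩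
    · exfalso
      have := congrArg List.length h
      simp only [List.length_cons, List.length_append, List.length_singleton,
        List.length_nil] at this
      omega
  -- pick a good list of maximal length
  set S : Set ℕ := {n | ∃ L : List (Sym2 V), Good G α L ∧ L.length = n} with hSdef
  have hSne : S.Nonempty := ⟨1, [e₁], hsingle, rfl⟩
  have hbdd : BddAbove S := by
    refine ⟨Fintype.card (Sym2 V), ?_⟩
    rintro n ⟨L, hL, rfl⟩
    exact hL.1.length_le_card
  obtain ⟨L, hL, hLlen⟩ := Nat.sSup_mem hSne hbdd
  have hmax : ∀ L' : List (Sym2 V), Good G α L' → L'.length ≤ sSup S := by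
    intro L' hL'
    exact le_csSup hbdd ⟨L', hL', rfl⟩
  have hLpos : 0 < L.length := by
    rw [hLlen]
    have : (1 : ℕ) ≤ sSup S := le_csSup hbdd ⟨[e₁], hsingle, rfl⟩
    omega
  -- claim: L contains every edge
  have hall : ∀ e ∈ G.edgeSet, e ∈ L := by
    by_contra hcon
    push_neg at hcon
    obtain ⟨e₀, he₀E, he₀L⟩ := hcon
    set A : Set V := {x | ∃ g ∈ L, x ∈ g} with hA
    have hAne : ∃ a, a ∈ A := by
      obtain ⟨g₀, hg₀⟩ := List.exists_mem_of_length_pos hLpos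
      exact ⟨g₀.out.1, g₀, hg₀, Sym2.out_fst_mem g₀⟩
    obtain ⟨a, haA⟩ := hAne
    -- there is an available edge
    have havail : ∃ f, f ∈ G.edgeSet ∧ f ∉ L ∧ ∃ g ∈ L, Shares f g := by
      by_cases hx : ∃ x ∈ A, x ∈ e₀
      · obtain ⟨x, ⟨g, hgL, hxg⟩, hxe⟩ := hx
        exact ⟨e₀, he₀E, he₀L, g, hgL, x, hxe, hxg⟩
      · push_neg at hx
        set u : V := e₀.out.1 with hu
        have huA : u ∉ A := fun h => hx u h (Sym2.out_fst_mem e₀)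
        obtain ⟨p⟩ := hG.preconnected u a
        obtain ⟨x, y, hadj, hxA, hyA⟩ := walk_cross p huA haA
        obtain ⟨g, hgL, hyg⟩ := hyA
        refine ⟨s(x, y), G.mem_edgeSet.2 hadj, ?_, g, hgL, y, by simp, hyg⟩
        intro hmem
        exact hxA ⟨s(x, y), hmem, by simp⟩
    -- choose an available edge of minimal colour
    set Avail : Set (Sym2 V) := {f | f ∈ G.edgeSet ∧ f ∉ L ∧ ∃ g ∈ L, Shares f g}
    have hAvne : (α '' Avail).Nonempty := by
      obtain ⟨f, hf⟩ := havail
      exact ⟨α f, f, hf, rfl⟩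
    obtain ⟨e, heAv, hec⟩ := Nat.sInf_mem hAvne
    have hmin : ∀ f ∈ Avail, α e ≤ α f := by
      intro f hf
      rw [hec]
      exact Nat.sInf_le ⟨f, hf, rfl⟩
    obtain ⟨heE, heL, g₁, hg₁L, hshare⟩ := heAv
    -- extend L by e
    have hgood : Good G α (L ++ [e]) := by
      refine ⟨?_, ?_, ?_⟩
      · rw [List.nodup_append]
        exact ⟨hL.1, List.nodup_singleton e, fun a ha b hb hab => heL (by rw [List.mem_singleton] at hb; rw [← hb, ← hab]; exact ha)⟩
      · intro f hf
        rcases List.mem_append.1 hf with hf | hf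
        · exact hL.2.1 f hf
        · simp at hf; subst hf; exact heE
      · intro l₁ f l₂ hsplit
        rcases List.eq_nil_or_concat l₂ with rfl | ⟨l₂', b, rfl⟩
        · have h := List.append_inj' hsplit.symm (by simp)
          have h₁L : l₁ = L := h.1
          have hfe : f = e := by
            have h2' := h.2
            simpa using h2'
          constructor
          · intro _
            exact ⟨g₁, by rw [h₁L]; exact hg₁L, by rw [hfe]; exact hshare⟩
          · intro k hk1 hkf
            rw [hfe] at hkf
            obtain ⟨x, hxe, hxg⟩ := hshare
            have hkd : k ≤ d := le_trans (le_of_lt hkf) (hle e heE)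
            obtain ⟨f', hf'E, hxf', hf'c⟩ := exists_colour_at hreg hα x hk1 hkd
            have hf'L : f' ∈ L := by
              by_contra hf'L
              have hmem : f' ∈ Avail := ⟨hf'E, hf'L, g₁, hg₁L, x, hxf', hxg⟩
              have := hmin f' hmem
              omega
            exact ⟨f', by rw [h₁L]; exact hf'L,
              ⟨x, by rw [hfe]; exact hxe, hxf'⟩, hf'c⟩
        · have hsplit' : (l₁ ++ f :: l₂') ++ [b] = L ++ [e] := by
            rw [hsplit]; simp
          obtain ⟨hLeq, -⟩ := List.append_inj' hsplit' (by simp)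
          exact hL.2.2 l₁ f l₂' hLeq.symm
    have := hmax (L ++ [e]) hgood
    rw [List.length_append, List.length_singleton, hLlen] at this
    omega
  -- L is a connected ordering
  have hiff : ∀ e, e ∈ L ↔ e ∈ G.edgeSet := fun e => ⟨fun h => hL.2.1 e h, fun h => hall e h⟩
  refine ⟨L, ⟨hL.1, hiff, ?_⟩, ?_⟩
  · intro i hi
    have hdecomp : L = L.take i ++ L.get i :: L.drop (i + 1) := by
      conv_lhs => rw [← List.take_append_drop (i : ℕ) L]
      congr 1
      exact List.drop_eq_getElem_cons i.isLt
    have := (hL.2.2 (L.take i) (L.get i) (L.drop (i + 1)) hdecomp).1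
    have htne : L.take (i : ℕ) ≠ [] := by
      intro h
      have h' := congrArg List.length h
      rw [List.length_take] at h'
      simp only [List.length_nil] at h'
      have := i.isLt
      omega
    obtain ⟨f, hfmem, hfsh⟩ := this htne
    obtain ⟨j, hj, hjf⟩ := List.getElem_of_mem hfmem
    rw [List.length_take] at hj
    have hj' : j < L.length := lt_of_lt_of_le (lt_of_lt_of_le hj (min_le_left _ _)) (le_of_lt i.isLt)
    refine ⟨⟨j, hj'⟩, lt_of_lt_of_le hj (min_le_left _ _), ?_⟩
    have : L.get ⟨j, hj'⟩ = f := by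
      rw [← hjf]
      simp [List.getElem_take]
    rw [this]
    exact hfsh
  · intro e he
    have := greedyExtend_eq h1 h2 L hL e
    rw [greedy, this, if_pos (hall e he)]
end
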